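/- arXiv:math/0111058 — 5 statements merged into one kernel-verified Lean document; each statement's English description precedes it below -/
import Mathlib

section
/- In the monoid L_ω, for all positive integers l ≤ k the following equations hold: δ_k·(δ_l γ_l) = (δ_l γ_l)·δ_k; δ_l·(δ_{k+2} γ_{k+2}) = (δ_k γ_k)·δ_l; (δ_l γ_l)·γ_k = γ_k·(δ_l γ_l); and (δ_{k+2} γ_{k+2})·γ_l = γ_l·(δ_k γ_k). -/
/-- Generators of the monoid `L_ω`: a cup `δ_k` and a cap `γ_k` for every positive integer `k`. -/
inductive LGen : Type
  | cup : ℕ+ → LGen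
  | cap : ℕ+ → LGen

/-- Words in the generators, i.e. elements of the free monoid on the generators. -/
abbrev LWord : Type := FreeMonoid LGen

/-- The word consisting of the single cup generator `δ_k`. -/
def cupW (k : ℕ+) : LWord := FreeMonoid.of (LGen.cup k)

/-- The word consisting of the single cap generator `γ_k`. -/
def capW (k : ℕ+) : LWord := FreeMonoid.of (LGen.cap k)

/-- The defining relations of the monoid `L_ω`. -/
inductive LRel : LWord → LWord → Prop
  | cup {k l : ℕ+} (h : l ≤ k) : LRel (cupW k * cupW l) (cupW l * cupW (k + 2))
  | cap {k l : ℕ+} (h : l ≤ k) : LRel (capW l * capW k) (capW (k + 2) * capW l)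
  | cupcap₁ {k l : ℕ+} (h : l ≤ k) : LRel (cupW l * capW (k + 2)) (capW k * cupW l)
  | cupcap₂ {k l : ℕ+} (h : l ≤ k) : LRel (cupW (k + 2) * capW l) (capW l * cupW k)
  | cupcap₃ (k : ℕ+) : LRel (cupW k * capW (k + 1)) 1
  | cupcap₃' (k : ℕ+) : LRel (cupW (k + 1) * capW k) 1

/-- The smallest monoid congruence containing the defining relations of `L_ω`. -/
def LCon : Con LWord := conGen LRel

/-- The monoid `L_ω`, presented by the cups and caps subject to the relations `LRel`. -/
abbrev Lomega : Type := LCon.Quotient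

/-- The cup `δ_k` as an element of `L_ω`. -/
def dk (k : ℕ+) : Lomega := LCon.mk' (cupW k)

/-- The cap `γ_k` as an element of `L_ω`. -/
def gk (k : ℕ+) : Lomega := LCon.mk' (capW k)

lemma lrel_eq {a b : LWord} (h : LRel a b) : LCon.mk' a = LCon.mk' b :=
  (Con.eq _).mpr (ConGen.Rel.of _ _ h)

lemma dd_eq {k l : ℕ+} (h : l ≤ k) : dk k * dk l = dk l * dk (k + 2) := by
  simpa [dk, map_mul] using lrel_eq (LRel.cup h)

lemma gg_eq {k l : ℕ+} (h : l ≤ k) : gk l * gk k = gk (k + 2) * gk l := by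
  simpa [gk, map_mul] using lrel_eq (LRel.cap h)

lemma dg1_eq {k l : ℕ+} (h : l ≤ k) : dk l * gk (k + 2) = gk k * dk l := by
  simpa [dk, gk, map_mul] using lrel_eq (LRel.cupcap₁ h)

lemma dg2_eq {k l : ℕ+} (h : l ≤ k) : dk (k + 2) * gk l = gk l * dk k := by
  simpa [dk, gk, map_mul] using lrel_eq (LRel.cupcap₂ h)

/-- In `L_ω`, for all positive integers `l ≤ k`: the circle equations
`δ_k (δ_l γ_l) = (δ_l γ_l) δ_k`, `δ_l (δ_{k+2} γ_{k+2}) = (δ_k γ_k) δ_l`,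
`(δ_l γ_l) γ_k = γ_k (δ_l γ_l)` and `(δ_{k+2} γ_{k+2}) γ_l = γ_l (δ_k γ_k)`. -/
theorem Lomega.circle_equations (k l : ℕ+) (h : l ≤ k) :
    dk k * (dk l * gk l) = (dk l * gk l) * dk k ∧
    dk l * (dk (k + 2) * gk (k + 2)) = (dk k * gk k) * dk l ∧
    (dk l * gk l) * gk k = gk k * (dk l * gk l) ∧
    (dk (k + 2) * gk (k + 2)) * gk l = gk l * (dk k * gk k) := by
  refine ⟨?_, ?_, ?_, ?_⟩
  · rw [← mul_assoc, dd_eq h, mul_assoc, mul_assoc, dg2_eq h]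
  · rw [← mul_assoc, ← dd_eq h, mul_assoc, mul_assoc, dg1_eq h, ← mul_assoc]
  · rw [mul_assoc, gg_eq h, ← mul_assoc, dg1_eq h, mul_assoc]
  · rw [mul_assoc, ← gg_eq h, ← mul_assoc, dg2_eq h, mul_assoc]
end

section
/- Every element of the monoid K_n is equal to an element in Jones normal form: that is, to c^l · h_{[b_1,a_1]} ⋯ h_{[b_k,a_k]} for some l, k ≥ 0, where a_q ≤ b_q for each q, a_1 < … < a_k, and b_1 < … < b_k (the empty product being 1). -/
/-- Generators of the monoid `K_n`: the diapsides `h_i` for `1 ≤ i ≤ n - 1`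
and the circle `c`. -/
inductive KnGen (n : ℕ) : Type
  | h (i : ℕ) (h1 : 1 ≤ i) (h2 : i < n) : KnGen n
  | c : KnGen n

/-- Words in the generators of `K_n`. -/
abbrev KnWord (n : ℕ) : Type := FreeMonoid (KnGen n)

/-- The word consisting of the single generator `h_i`. -/
def hW (n : ℕ) (i : ℕ) (h1 : 1 ≤ i) (h2 : i < n) : KnWord n := FreeMonoid.of (KnGen.h i h1 h2)

/-- The word consisting of the single generator `c`. -/
def cW (n : ℕ) : KnWord n := FreeMonoid.of KnGen.c

/-- The defining relations of the monoid `K_n`. -/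
inductive KnRel (n : ℕ) : KnWord n → KnWord n → Prop
  | comm (i j : ℕ) (hi1 : 1 ≤ i) (hi2 : i < n) (hj1 : 1 ≤ j) (hj2 : j < n)
      (hij : i + 2 ≤ j ∨ j + 2 ≤ i) :
      KnRel n (hW n i hi1 hi2 * hW n j hj1 hj2) (hW n j hj1 hj2 * hW n i hi1 hi2)
  | braid₁ (i : ℕ) (h1 : 1 ≤ i) (h2 : i + 1 < n) :
      KnRel n (hW n i h1 (by omega) * hW n (i + 1) (by omega) h2 * hW n i h1 (by omega))
        (hW n i h1 (by omega))
  | braid₂ (i : ℕ) (h1 : 1 ≤ i) (h2 : i + 1 < n) :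
      KnRel n
        (hW n (i + 1) (by omega) h2 * hW n i h1 (by omega) * hW n (i + 1) (by omega) h2)
        (hW n (i + 1) (by omega) h2)
  | hc (i : ℕ) (h1 : 1 ≤ i) (h2 : i < n) :
      KnRel n (hW n i h1 h2 * cW n) (cW n * hW n i h1 h2)
  | hh (i : ℕ) (h1 : 1 ≤ i) (h2 : i < n) :
      KnRel n (hW n i h1 h2 * hW n i h1 h2) (cW n * hW n i h1 h2)

/-- The smallest monoid congruence containing the defining relations of `K_n`. -/
def KnCon (n : ℕ) : Con (KnWord n) := conGen (KnRel n)

/-- The monoid `K_n`, presented by the generators `h_1, …, h_{n-1}` and `c` subject to the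
relations `KnRel n`. -/
abbrev Kn (n : ℕ) : Type := (KnCon n).Quotient

/-- The diapsis `h_i` as an element of `K_n`. -/
def hK (n : ℕ) (i : ℕ) (h1 : 1 ≤ i) (h2 : i < n) : Kn n := (KnCon n).mk' (hW n i h1 h2)

/-- The circle `c` as an element of `K_n`. -/
def cK (n : ℕ) : Kn n := (KnCon n).mk' (cW n)

/-- The diapsis `h_i` as an element of `K_n`, as a total function of `i`
(junk value `1` for invalid indices). -/
def hT (n : ℕ) (i : ℕ) : Kn n :=
  if h : 1 ≤ i ∧ i < n then hK n i h.1 h.2 else 1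

/-- The block `h_{[i,j]} = h_i h_{i-1} ⋯ h_{j+1} h_j` of `K_n` (for `1 ≤ j ≤ i ≤ n - 1`). -/
def block (n : ℕ) (i j : ℕ) : Kn n :=
  (((List.range' j (i + 1 - j)).reverse).map (hT n)).prod

namespace KnNF
open List

variable {n : ℕ}

/-! ### Lifting the relations to the quotient -/

lemma mk'_rel {a b : KnWord n} (h : KnRel n a b) : (KnCon n).mk' a = (KnCon n).mk' b := by
  simp only [Con.coe_mk']; exact (Con.eq _).2 (ConGen.Rel.of _ _ h)

lemma hT_eq_hK {i : ℕ} (h1 : 1 ≤ i) (h2 : i < n) : hT n i = hK n i h1 h2 := by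
  simp [hT, h1, h2]

lemma hT_valid_or_one (i : ℕ) :
    (1 ≤ i ∧ i < n) ∨ hT n i = 1 := by
  by_cases h : 1 ≤ i ∧ i < n
  · exact Or.inl h
  · right; simp [hT, h]

lemma hT_comm {i j : ℕ} (hij : i + 2 ≤ j ∨ j + 2 ≤ i) :
    Commute (hT n i) (hT n j) := by
  rcases hT_valid_or_one (n := n) i with hi | hi
  · rcases hT_valid_or_one (n := n) j with hj | hj
    · rw [hT_eq_hK hi.1 hi.2, hT_eq_hK hj.1 hj.2]
      show _ = _
      rw [hK, hK, ← map_mul, ← map_mul]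
      exact mk'_rel (KnRel.comm i j hi.1 hi.2 hj.1 hj.2 hij)
    · rw [hj]; exact Commute.one_right _
  · rw [hi]; exact Commute.one_left _

lemma hT_braid₁ {i : ℕ} (h1 : 1 ≤ i) (h2 : i + 1 < n) :
    hT n i * hT n (i + 1) * hT n i = hT n i := by
  rw [hT_eq_hK h1 (by omega), hT_eq_hK (show 1 ≤ i + 1 by omega) h2]
  show (KnCon n).mk' _ * (KnCon n).mk' _ * (KnCon n).mk' _ = (KnCon n).mk' _
  rw [← map_mul, ← map_mul]
  exact mk'_rel (KnRel.braid₁ i h1 h2)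

lemma hT_braid₂ {i : ℕ} (h1 : 1 ≤ i) (h2 : i + 1 < n) :
    hT n (i + 1) * hT n i * hT n (i + 1) = hT n (i + 1) := by
  rw [hT_eq_hK h1 (by omega), hT_eq_hK (show 1 ≤ i + 1 by omega) h2]
  show (KnCon n).mk' _ * (KnCon n).mk' _ * (KnCon n).mk' _ = (KnCon n).mk' _
  rw [← map_mul, ← map_mul]
  exact mk'_rel (KnRel.braid₂ i h1 h2)

lemma hT_sq {i : ℕ} (h1 : 1 ≤ i) (h2 : i < n) :
    hT n i * hT n i = cK n * hT n i := by
  rw [hT_eq_hK h1 h2]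
  show (KnCon n).mk' _ * (KnCon n).mk' _ = (KnCon n).mk' _ * (KnCon n).mk' _
  rw [← map_mul, ← map_mul]
  exact mk'_rel (KnRel.hh i h1 h2)

lemma cK_comm_hT (i : ℕ) : Commute (cK n) (hT n i) := by
  rcases hT_valid_or_one (n := n) i with hi | hi
  · rw [hT_eq_hK hi.1 hi.2]
    show _ = _
    rw [cK, hK, ← map_mul, ← map_mul]
    exact (mk'_rel (KnRel.hc i hi.1 hi.2)).symm
  · rw [hi]; exact Commute.one_right _

/-! ### Blocks -/

lemma block_nil {i j : ℕ} (h : i < j) : block n i j = 1 := by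
  have : i + 1 - j = 0 := by omega
  simp [block, this]

lemma block_single (i : ℕ) : block n i i = hT n i := by
  simp [block]

lemma block_concat {i j k : ℕ} (h1 : j ≤ k + 1) (h2 : k ≤ i) :
    block n i j = block n i (k + 1) * block n k j := by
  unfold block
  rw [← List.prod_append, ← List.map_append, ← List.reverse_append]
  congr 2
  have : List.range' j (k + 1 - j) ++ List.range' (k + 1) (i - k) = List.range' j (i + 1 - j) := by
    have := List.range'_append (s := j) (m := k + 1 - j) (n := i - k) (step := 1)
    simp only [one_mul, Nat.mul_one] at this
    rw [show j + (k + 1 - j) = k + 1 by omega] at this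
    rw [show k + 1 - j + (i - k) = i + 1 - j by omega] at this
    exact this
  rw [show i + 1 - (k + 1) = i - k by omega]
  exact congrArg List.reverse this.symm

lemma block_top {i j : ℕ} (h1 : j ≤ i) (h2 : 1 ≤ i) :
    block n i j = hT n i * block n (i - 1) j := by
  have h3 : i - 1 + 1 = i := by omega
  rw [block_concat (k := i - 1) (by omega) (by omega), h3, block_single]

lemma block_bot {i j : ℕ} (h1 : j ≤ i) :
    block n i j = block n i (j + 1) * hT n j := by
  rw [block_concat (k := j) (by omega) h1, block_single]

lemma commute_hT_block {i d c : ℕ} (h : i + 2 ≤ c ∨ d + 2 ≤ i) :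
    Commute (hT n i) (block n d c) := by
  apply Commute.list_prod_right
  intro x hx
  simp only [List.mem_map, List.mem_reverse] at hx
  obtain ⟨k, hk, rfl⟩ := hx
  rw [List.mem_range'] at hk
  obtain ⟨m, hm, rfl⟩ := hk
  exact hT_comm (by omega)

lemma commute_block_block {b a d c : ℕ} (h : b + 2 ≤ c ∨ d + 2 ≤ a) :
    Commute (block n b a) (block n d c) := by
  apply Commute.list_prod_right
  intro x hx
  simp only [List.mem_map, List.mem_reverse] at hx
  obtain ⟨k, hk, rfl⟩ := hx
  rw [List.mem_range'] at hk
  obtain ⟨m, hm, rfl⟩ := hk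
  exact ((commute_hT_block (i := c + 1 * m) (d := b) (c := a) (by omega))).symm

lemma cK_comm_block (d c : ℕ) : Commute (cK n) (block n d c) := by
  apply Commute.list_prod_right
  intro x hx
  simp only [List.mem_map, List.mem_reverse] at hx
  obtain ⟨k, _, rfl⟩ := hx
  exact cK_comm_hT k

end KnNF
namespace KnNF
open List
variable {n : ℕ}

/-! ### Key identities -/

lemma block_absorb {a b : ℕ} (h1 : 1 ≤ a) (h2 : a ≤ b) (h3 : b < n) :
    block n b a * hT n a = cK n * block n b a := by
  rw [block_bot h2, mul_assoc, hT_sq h1 (by omega), ← mul_assoc, ← mul_assoc,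
    ← (cK_comm_block (n := n) b (a+1)).eq, mul_assoc]

lemma block_mul_hT {a i b : ℕ} (h1 : 1 ≤ a) (hai : a < i) (hib : i ≤ b) (hb : b < n) :
    block n b a * hT n i = block n b i * block n (i-2) a := by
  have e1 : block n b a = block n b (i+1) * (hT n i * (hT n (i-1) * block n (i-2) a)) := by
    rw [block_concat (k := i) (by omega) hib,
        block_top (i := i) (j := a) (by omega) (by omega),
        block_top (i := i-1) (j := a) (by omega) (by omega),
        show i - 1 - 1 = i - 2 from by omega]
  have hc : Commute (block n (i-2) a) (hT n i) :=
    (commute_hT_block (Or.inr (by omega))).symm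
  have hbr : hT n i * hT n (i-1) * hT n i = hT n i := by
    have := hT_braid₂ (n := n) (i := i-1) (by omega) (by omega)
    rwa [show i - 1 + 1 = i from by omega] at this
  calc block n b a * hT n i
      = block n b (i+1) * (hT n i * (hT n (i-1) * (block n (i-2) a * hT n i))) := by
        rw [e1]; simp only [mul_assoc]
    _ = block n b (i+1) * (hT n i * (hT n (i-1) * (hT n i * block n (i-2) a))) := by
        rw [hc.eq]
    _ = block n b (i+1) * ((hT n i * hT n (i-1) * hT n i) * block n (i-2) a) := by
        simp only [mul_assoc]
    _ = block n b (i+1) * (hT n i * block n (i-2) a) := by rw [hbr]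
    _ = (block n b (i+1) * hT n i) * block n (i-2) a := by rw [mul_assoc]
    _ = block n b i * block n (i-2) a := by rw [← block_bot hib]

lemma hT_mul_block {c a d : ℕ} (h1 : 1 ≤ c) (hca : c ≤ a) (had : a < d) (hd : d < n) :
    hT n a * block n d c = block n d (a+2) * block n a c := by
  have e1 : block n d c = block n d (a+2) * (hT n (a+1) * (hT n a * block n (a-1) c)) := by
    rw [block_concat (k := a+1) (by omega) (by omega),
        show a + 1 + 1 = a + 2 from rfl,
        block_top (i := a+1) (j := c) (by omega) (by omega),
        show a + 1 - 1 = a from by omega,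
        block_top (i := a) (j := c) hca (by omega)]
  have hc : Commute (hT n a) (block n d (a+2)) := commute_hT_block (Or.inl (by omega))
  have hbr : hT n a * hT n (a+1) * hT n a = hT n a := hT_braid₁ (by omega) (by omega)
  calc hT n a * block n d c
      = block n d (a+2) * (hT n a * hT n (a+1) * hT n a * block n (a-1) c) := by
        rw [e1, ← mul_assoc, hc.eq]; simp only [mul_assoc]
    _ = block n d (a+2) * (hT n a * block n (a-1) c) := by rw [hbr]
    _ = block n d (a+2) * block n a c := by rw [← block_top hca (by omega)]

lemma block_block_top_eq {a c d : ℕ} (h1 : 1 ≤ a) (hac : a < c) (hcd : c ≤ d) (hd : d < n) :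
    block n d a * block n d c = block n (d-2) a * block n d c := by
  have e1 : block n d a = hT n d * (hT n (d-1) * block n (d-2) a) := by
    rw [block_top (i := d) (j := a) (by omega) (by omega),
        block_top (i := d-1) (j := a) (by omega) (by omega),
        show d - 1 - 1 = d - 2 from by omega]
  have e2 : block n d c = hT n d * block n (d-1) c := block_top hcd (by omega)
  have hc : Commute (block n (d-2) a) (hT n d) :=
    (commute_hT_block (Or.inr (by omega))).symm
  have hbr : hT n d * hT n (d-1) * hT n d = hT n d := by
    have := hT_braid₂ (n := n) (i := d-1) (by omega) (by omega)
    rwa [show d - 1 + 1 = d from by omega] at this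
  calc block n d a * block n d c
      = hT n d * (hT n (d-1) * (block n (d-2) a * hT n d * block n (d-1) c)) := by
        rw [e1, e2]; simp only [mul_assoc]
    _ = hT n d * (hT n (d-1) * (hT n d * block n (d-2) a * block n (d-1) c)) := by
        rw [hc.eq]
    _ = (hT n d * hT n (d-1) * hT n d) * (block n (d-2) a * block n (d-1) c) := by
        simp only [mul_assoc]
    _ = hT n d * (block n (d-2) a * block n (d-1) c) := by rw [hbr]
    _ = (hT n d * block n (d-2) a) * block n (d-1) c := by rw [mul_assoc]
    _ = (block n (d-2) a * hT n d) * block n (d-1) c := by rw [hc.symm.eq]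
    _ = block n (d-2) a * block n d c := by rw [e2]; simp only [mul_assoc]

lemma block_merge_low {a c d b : ℕ} (h1 : 1 ≤ a) (hac : a < c) (hcd : c ≤ d) (hdb : d ≤ b)
    (hb : b < n) :
    block n b a * block n d c = block n (d-2) a * block n b c := by
  have e1 : block n b a = block n b (d+1) * block n d a := block_concat (by omega) hdb
  have e2 : block n b c = block n b (d+1) * block n d c := block_concat (by omega) hdb
  have hcm : Commute (block n b (d+1)) (block n (d-2) a) :=
    (commute_block_block (b := d-2) (a := a) (d := b) (c := d+1) (Or.inl (by omega))).symm
  calc block n b a * block n d c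
      = block n b (d+1) * (block n d a * block n d c) := by rw [e1, mul_assoc]
    _ = block n b (d+1) * (block n (d-2) a * block n d c) := by
        rw [block_block_top_eq h1 hac hcd (by omega)]
    _ = (block n b (d+1) * block n (d-2) a) * block n d c := by rw [mul_assoc]
    _ = (block n (d-2) a * block n b (d+1)) * block n d c := by rw [hcm.eq]
    _ = block n (d-2) a * block n b c := by rw [mul_assoc, ← e2]

lemma block_merge_split {c a b d : ℕ} (h1 : 1 ≤ c) (hca : c ≤ a) (hab : a ≤ b) (had : a + 1 ≤ d)
    (hd : d < n) (hb : b < n) :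
    block n b a * block n d c = block n b c * block n d (a+2) := by
  have e1 : block n b a = block n b (a+1) * hT n a := block_bot hab
  have hcm : Commute (block n d (a+2)) (block n a c) :=
    commute_block_block (b := d) (a := a+2) (d := a) (c := c) (Or.inr (by omega))
  have e2 : block n b c = block n b (a+1) * block n a c := block_concat (by omega) hab
  calc block n b a * block n d c
      = block n b (a+1) * (hT n a * block n d c) := by rw [e1, mul_assoc]
    _ = block n b (a+1) * (block n d (a+2) * block n a c) := by
        rw [hT_mul_block h1 hca (by omega) hd]
    _ = block n b (a+1) * (block n a c * block n d (a+2)) := by rw [hcm.eq]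
    _ = (block n b (a+1) * block n a c) * block n d (a+2) := by rw [mul_assoc]
    _ = block n b c * block n d (a+2) := by rw [← e2]

end KnNF
namespace KnNF
open List
variable {n : ℕ}

/-! ### Normal form data -/

def Valid (n : ℕ) (ps : List (ℕ × ℕ)) : Prop :=
  (∀ q ∈ ps, 1 ≤ q.2 ∧ q.2 ≤ q.1 ∧ q.1 < n) ∧
    List.Pairwise (· < ·) (ps.map Prod.snd) ∧ List.Pairwise (· < ·) (ps.map Prod.fst)

def prodB (n : ℕ) (ps : List (ℕ × ℕ)) : Kn n := (ps.map fun q => block n q.1 q.2).prod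

def TopsLt (ps : List (ℕ × ℕ)) (t : ℕ) : Prop := ∀ q ∈ ps, q.1 < t
def BotsLt (ps : List (ℕ × ℕ)) (t : ℕ) : Prop := ∀ q ∈ ps, q.2 < t
def Lsum (ps : List (ℕ × ℕ)) : ℕ := (ps.map fun q => q.1 + 1 - q.2).sum

lemma prodB_nil : prodB n [] = 1 := rfl

lemma prodB_append_single (ps : List (ℕ × ℕ)) (q : ℕ × ℕ) :
    prodB n (ps ++ [q]) = prodB n ps * block n q.1 q.2 := by
  simp [prodB]

lemma Lsum_append_single (ps : List (ℕ × ℕ)) (q : ℕ × ℕ) :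
    Lsum (ps ++ [q]) = Lsum ps + (q.1 + 1 - q.2) := by
  simp [Lsum]

lemma sorted_concat_iff {l : List ℕ} {a : ℕ} :
    List.Pairwise (· < ·) (l ++ [a]) ↔ List.Pairwise (· < ·) l ∧ ∀ x ∈ l, x < a := by
  simp [List.pairwise_append]

lemma valid_nil : Valid n [] := by
  refine ⟨by simp, by simp, by simp⟩

lemma Valid.append {ps : List (ℕ × ℕ)} {d c : ℕ} (hv : Valid n ps) (ht : TopsLt ps d)
    (hb : BotsLt ps c) (h1 : 1 ≤ c) (h2 : c ≤ d) (h3 : d < n) :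
    Valid n (ps ++ [(d, c)]) := by
  obtain ⟨hr, hs, hf⟩ := hv
  refine ⟨?_, ?_, ?_⟩
  · intro q hq
    rcases List.mem_append.1 hq with hq | hq
    · exact hr q hq
    · simp at hq; subst hq; exact ⟨h1, h2, h3⟩
  · rw [List.map_append]
    refine sorted_concat_iff.2 ⟨hs, ?_⟩
    intro x hx
    obtain ⟨q, hq, rfl⟩ := List.mem_map.1 hx
    exact hb q hq
  · rw [List.map_append]
    refine sorted_concat_iff.2 ⟨hf, ?_⟩
    intro x hx
    obtain ⟨q, hq, rfl⟩ := List.mem_map.1 hx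
    exact ht q hq

lemma valid_concat {S : List (ℕ × ℕ)} {b a : ℕ} (hv : Valid n (S ++ [(b, a)])) :
    Valid n S ∧ TopsLt S b ∧ BotsLt S a ∧ 1 ≤ a ∧ a ≤ b ∧ b < n := by
  obtain ⟨hr, hs, hf⟩ := hv
  rw [List.map_append] at hs hf
  obtain ⟨hs, hs'⟩ := sorted_concat_iff.1 hs
  obtain ⟨hf, hf'⟩ := sorted_concat_iff.1 hf
  have hmem : (b, a) ∈ S ++ [(b, a)] := by simp
  obtain ⟨ha1, hab, hbn⟩ := hr _ hmem
  refine ⟨⟨fun q hq => hr q (List.mem_append_left _ hq), hs, hf⟩, ?_, ?_, ha1, hab, hbn⟩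
  · intro q hq; exact hf' q.1 (List.mem_map.2 ⟨q, hq, rfl⟩)
  · intro q hq; exact hs' q.2 (List.mem_map.2 ⟨q, hq, rfl⟩)

lemma cK_comm_prodB (ps : List (ℕ × ℕ)) : Commute (cK n) (prodB n ps) := by
  apply Commute.list_prod_right
  intro x hx
  obtain ⟨q, _, rfl⟩ := List.mem_map.1 hx
  exact cK_comm_block _ _

end KnNF
namespace KnNF
open List
variable {n : ℕ}

/-- Appending a block whose bottom exceeds all bottoms of the normal form. -/
lemma append2 : ∀ μ : ℕ, ∀ R : List (ℕ × ℕ), ∀ d c : ℕ,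
    Lsum R + (d + 1 - c) ≤ μ → Valid n R → 1 ≤ c → c ≤ d → d < n → BotsLt R c →
    ∃ m R', Valid n R' ∧ prodB n R * block n d c = cK n ^ m * prodB n R' ∧
      Lsum R' ≤ Lsum R + (d + 1 - c) ∧
      (∀ t, d < t → TopsLt R t → TopsLt R' t) ∧
      (∀ t, c < t → BotsLt R t → BotsLt R' t) := by
  intro μ
  induction μ with
  | zero => intro R d c hμ _ h1 h2 _ _; omega
  | succ μ ih =>
    intro R d c hμ hv h1 h2 hd hbots
    rcases List.eq_nil_or_concat R with rfl | ⟨S, ⟨b, a⟩, rfl⟩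
    · refine ⟨0, [(d, c)], ?_, by simp [prodB], by simp [Lsum], ?_, ?_⟩
      · exact valid_nil.append (by intro q hq; simp at hq) (by intro q hq; simp at hq) h1 h2 hd
      · intro t ht _ q hq; rw [List.mem_singleton] at hq; subst hq; exact ht
      · intro t ht _ q hq; rw [List.mem_singleton] at hq; subst hq; exact ht
    · rw [List.concat_eq_append] at hμ hv hbots ⊢
      obtain ⟨hvS, htS, hbS, ha1, hab, hbn⟩ := valid_concat hv
      have hac : a < c := hbots (b, a) (by simp)
      have hLR : Lsum (S ++ [(b, a)]) = Lsum S + (b + 1 - a) := Lsum_append_single _ _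
      by_cases hbd : b < d
      · -- in order: append directly
        refine ⟨0, (S ++ [(b, a)]) ++ [(d, c)], ?_, ?_, ?_, ?_, ?_⟩
        · refine hv.append ?_ hbots h1 h2 hd
          intro q hq
          rcases List.mem_append.1 hq with hq | hq
          · exact lt_trans (htS q hq) hbd
          · simp at hq; subst hq; exact hbd
        · rw [pow_zero, one_mul, prodB_append_single (S ++ [(b, a)]) (d, c)]
        · rw [Lsum_append_single]
        · intro t ht hT q hq
          rcases List.mem_append.1 hq with hq | hq
          · exact hT q hq
          · simp at hq; subst hq; exact ht
        · intro t ht hB q hq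
          rcases List.mem_append.1 hq with hq | hq
          · exact hB q hq
          · simp at hq; subst hq; exact ht
      · push_neg at hbd
        have heq : block n b a * block n d c = block n (d - 2) a * block n b c :=
          block_merge_low ha1 hac h2 hbd hbn
        by_cases hda : d ≤ a + 1
        · -- low part empty
          have hnil : block n (d - 2) a = 1 := block_nil (by omega)
          obtain ⟨m, R', hv', he', hL', hT', hB'⟩ :=
            ih S b c (by omega) hvS h1 (le_trans h2 hbd) hbn
              (fun q hq => lt_trans (hbS q hq) hac)
          refine ⟨m, R', hv', ?_, by omega, ?_, ?_⟩
          · rw [prodB_append_single, mul_assoc, heq, hnil, one_mul, he']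
          · intro t ht hT
            exact hT' t (hT (b, a) (by simp)) (fun q hq => hT q (List.mem_append_left _ hq))
          · intro t ht hB
            exact hB' t ht (fun q hq => hB q (List.mem_append_left _ hq))
        · push_neg at hda
          obtain ⟨m1, R1, hv1, he1, hL1, hT1, hB1⟩ :=
            ih S (d - 2) a (by omega) hvS ha1 (by omega) (by omega) hbS
          obtain ⟨m2, R2, hv2, he2, hL2, hT2, hB2⟩ :=
            ih R1 b c (by omega) hv1 h1 (le_trans h2 hbd) hbn
              (hB1 c hac (fun q hq => lt_trans (hbS q hq) hac))
          refine ⟨m1 + m2, R2, hv2, ?_, by omega, ?_, ?_⟩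
          · calc prodB n (S ++ [(b, a)]) * block n d c
                = prodB n S * (block n b a * block n d c) := by
                  rw [prodB_append_single, mul_assoc]
              _ = prodB n S * (block n (d - 2) a * block n b c) := by rw [heq]
              _ = (prodB n S * block n (d - 2) a) * block n b c := by rw [mul_assoc]
              _ = (cK n ^ m1 * prodB n R1) * block n b c := by rw [he1]
              _ = cK n ^ m1 * (prodB n R1 * block n b c) := by rw [mul_assoc]
              _ = cK n ^ m1 * (cK n ^ m2 * prodB n R2) := by rw [he2]
              _ = cK n ^ (m1 + m2) * prodB n R2 := by rw [← mul_assoc, ← pow_add]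
          · intro t ht hT
            have hbt : b < t := hT (b, a) (by simp)
            exact hT2 t hbt (hT1 t (by omega) (fun q hq => hT q (List.mem_append_left _ hq)))
          · intro t ht hB
            exact hB2 t ht (hB1 t (by omega) (fun q hq => hB q (List.mem_append_left _ hq)))

end KnNF
namespace KnNF
open List
variable {n : ℕ}

/-- Appending a block whose top exceeds all tops of the normal form. -/
lemma appendBig : ∀ μ : ℕ, ∀ R : List (ℕ × ℕ), ∀ d c : ℕ,
    Lsum R + (d + 1 - c) ≤ μ → Valid n R → 1 ≤ c → c ≤ d → d < n → TopsLt R d →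
    ∃ m R', Valid n R' ∧ prodB n R * block n d c = cK n ^ m * prodB n R' ∧
      Lsum R' ≤ Lsum R + (d + 1 - c) ∧
      TopsLt R' (d + 1) ∧
      (∀ t, c < t → (∀ q ∈ R, q.2 + 2 < t) → BotsLt R' t) := by
  intro μ
  induction μ with
  | zero => intro R d c hμ _ h1 h2 _ _; omega
  | succ μ ih =>
    intro R d c hμ hv h1 h2 hd htops
    rcases List.eq_nil_or_concat R with rfl | ⟨S, ⟨b, a⟩, rfl⟩
    · refine ⟨0, [(d, c)], ?_, by simp [prodB], by simp [Lsum], ?_, ?_⟩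
      · exact valid_nil.append (by intro q hq; simp at hq) (by intro q hq; simp at hq) h1 h2 hd
      · intro q hq; rw [List.mem_singleton] at hq; subst hq; omega
      · intro t ht _ q hq; rw [List.mem_singleton] at hq; subst hq; exact ht
    · rw [List.concat_eq_append] at hμ hv htops ⊢
      obtain ⟨hvS, htS, hbS, ha1, hab, hbn⟩ := valid_concat hv
      have hbd : b < d := htops (b, a) (by simp)
      have hLR : Lsum (S ++ [(b, a)]) = Lsum S + (b + 1 - a) := Lsum_append_single _ _
      by_cases hac : a < c
      · -- in order: append directly
        refine ⟨0, (S ++ [(b, a)]) ++ [(d, c)], ?_, ?_, ?_, ?_, ?_⟩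
        · refine hv.append htops ?_ h1 h2 hd
          intro q hq
          rcases List.mem_append.1 hq with hq | hq
          · exact lt_trans (hbS q hq) hac
          · simp at hq; subst hq; exact hac
        · rw [pow_zero, one_mul, prodB_append_single (S ++ [(b, a)]) (d, c)]
        · rw [Lsum_append_single]
        · intro q hq
          rcases List.mem_append.1 hq with hq | hq
          · exact lt_trans (htops q hq) (by omega)
          · simp at hq; subst hq; omega
        · intro t ht hB q hq
          rcases List.mem_append.1 hq with hq | hq
          · have := hB q hq; omega
          · simp at hq; subst hq; exact ht
      · push_neg at hac
        have hsplit : block n b a * block n d c = block n b c * block n d (a + 2) :=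
          block_merge_split h1 hac hab (by omega) hd hbn
        obtain ⟨m1, R1, hv1, he1, hL1, hT1, hB1⟩ :=
          ih S b c (by omega) hvS h1 (le_trans hac hab) hbn htS
        have htR1d : TopsLt R1 d := fun q hq => lt_of_lt_of_le (hT1 q hq) hbd
        have hbR1 : BotsLt R1 (a + 2) :=
          hB1 (a + 2) (by omega) (fun q hq => by have := hbS q hq; omega)
        by_cases hd2 : a + 2 ≤ d
        · refine ⟨m1, R1 ++ [(d, a + 2)], ?_, ?_, ?_, ?_, ?_⟩
          · exact hv1.append htR1d hbR1 (by omega) hd2 hd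
          · calc prodB n (S ++ [(b, a)]) * block n d c
                = prodB n S * (block n b a * block n d c) := by
                  rw [prodB_append_single, mul_assoc]
              _ = (prodB n S * block n b c) * block n d (a + 2) := by
                  rw [hsplit, mul_assoc]
              _ = (cK n ^ m1 * prodB n R1) * block n d (a + 2) := by rw [he1]
              _ = cK n ^ m1 * prodB n (R1 ++ [(d, a + 2)]) := by
                  rw [prodB_append_single R1 (d, a + 2), mul_assoc]
          · rw [Lsum_append_single]; omega
          · intro q hq
            rcases List.mem_append.1 hq with hq | hq
            · exact lt_of_lt_of_le (hT1 q hq) (by omega)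
            · simp at hq; subst hq; omega
          · intro t ht hB q hq
            rcases List.mem_append.1 hq with hq | hq
            · exact hB1 t ht (fun p hp => hB p (List.mem_append_left _ hp)) q hq
            · simp at hq; subst hq
              have := hB (b, a) (by simp); omega
        · -- a + 2 > d : second block empty
          have hnil : block n d (a + 2) = 1 := block_nil (by omega)
          refine ⟨m1, R1, hv1, ?_, by omega, ?_, ?_⟩
          · calc prodB n (S ++ [(b, a)]) * block n d c
                = prodB n S * (block n b a * block n d c) := by
                  rw [prodB_append_single, mul_assoc]
              _ = (prodB n S * block n b c) * block n d (a + 2) := by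
                  rw [hsplit, mul_assoc]
              _ = (prodB n S * block n b c) := by rw [hnil, mul_one]
              _ = cK n ^ m1 * prodB n R1 := he1
          · intro q hq; exact lt_of_lt_of_le (hT1 q hq) (by omega)
          · intro t ht hB
            exact hB1 t ht (fun p hp => hB p (List.mem_append_left _ hp))

end KnNF
namespace KnNF
open List
variable {n : ℕ}

/-- Multiplying a normal form by a single generator. -/
lemma appendGen : ∀ μ : ℕ, ∀ R : List (ℕ × ℕ), ∀ i : ℕ,
    R.length ≤ μ → Valid n R → 1 ≤ i → i < n →
    ∃ m R', Valid n R' ∧ prodB n R * hT n i = cK n ^ m * prodB n R' ∧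
      (∀ t, i < t → TopsLt R t → TopsLt R' t) := by
  intro μ
  induction μ with
  | zero =>
    intro R i hμ hv h1 h2
    have hR : R = [] := List.length_eq_zero_iff.1 (by omega)
    subst hR
    refine ⟨0, [(i, i)], ?_, ?_, ?_⟩
    · exact valid_nil.append (by intro q hq; simp at hq) (by intro q hq; simp at hq) h1 le_rfl h2
    · simp [prodB, block_single]
    · intro t ht _ q hq; rw [List.mem_singleton] at hq; subst hq; exact ht
  | succ μ ih =>
    intro R i hμ hv h1 h2
    rcases List.eq_nil_or_concat R with rfl | ⟨S, ⟨b, a⟩, rfl⟩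
    · refine ⟨0, [(i, i)], ?_, ?_, ?_⟩
      · exact valid_nil.append (by intro q hq; simp at hq) (by intro q hq; simp at hq) h1 le_rfl h2
      · simp [prodB, block_single]
      · intro t ht _ q hq; rw [List.mem_singleton] at hq; subst hq; exact ht
    · rw [List.concat_eq_append] at hμ hv ⊢
      obtain ⟨hvS, htS, hbS, ha1, hab, hbn⟩ := valid_concat hv
      by_cases hbi : b < i
      · -- append the singleton block (i, i)
        refine ⟨0, (S ++ [(b, a)]) ++ [(i, i)], ?_, ?_, ?_⟩
        · refine hv.append ?_ ?_ h1 le_rfl h2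
          · intro q hq
            rcases List.mem_append.1 hq with hq | hq
            · exact lt_trans (htS q hq) hbi
            · simp at hq; subst hq; exact hbi
          · intro q hq
            rcases List.mem_append.1 hq with hq | hq
            · exact lt_of_lt_of_le (hbS q hq) (by omega)
            · simp at hq; subst hq; omega
        · rw [pow_zero, one_mul, prodB_append_single (S ++ [(b, a)]) (i, i)]
          rw [block_single]
        · intro t ht hT q hq
          rcases List.mem_append.1 hq with hq | hq
          · exact hT q hq
          · simp at hq; subst hq; exact ht
      · push_neg at hbi
        by_cases hia : i = a
        · -- circle
          subst hia
          refine ⟨1, S ++ [(b, i)], hv, ?_, fun t _ hT => hT⟩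
          calc prodB n (S ++ [(b, i)]) * hT n i
              = prodB n S * (block n b i * hT n i) := by
                rw [prodB_append_single, mul_assoc]
            _ = prodB n S * (cK n * block n b i) := by rw [block_absorb h1 hbi hbn]
            _ = (prodB n S * cK n) * block n b i := by rw [mul_assoc]
            _ = (cK n * prodB n S) * block n b i := by rw [← (cK_comm_prodB S).eq]
            _ = cK n ^ 1 * prodB n (S ++ [(b, i)]) := by
                rw [pow_one, prodB_append_single, mul_assoc]
        · by_cases hai : a < i
          · -- split the last block
            have hsp : block n b a * hT n i = block n b i * block n (i - 2) a :=
              block_mul_hT ha1 hai hbi hbn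
            have hcm : Commute (block n b i) (block n (i - 2) a) :=
              commute_block_block (b := b) (a := i) (d := i - 2) (c := a) (Or.inr (by omega))
            by_cases hia2 : i ≤ a + 1
            · -- low block empty
              have hnil : block n (i - 2) a = 1 := block_nil (by omega)
              refine ⟨0, S ++ [(b, i)], ?_, ?_, ?_⟩
              · exact hvS.append htS (fun q hq => lt_trans (hbS q hq) hai) h1 hbi hbn
              · calc prodB n (S ++ [(b, a)]) * hT n i
                    = prodB n S * (block n b a * hT n i) := by
                      rw [prodB_append_single, mul_assoc]
                  _ = prodB n S * (block n b i * block n (i - 2) a) := by rw [hsp]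
                  _ = prodB n S * block n b i := by rw [hnil, mul_one]
                  _ = cK n ^ 0 * prodB n (S ++ [(b, i)]) := by
                      rw [pow_zero, one_mul, prodB_append_single]
              · intro t ht hT q hq
                rcases List.mem_append.1 hq with hq | hq
                · exact hT q (List.mem_append_left _ hq)
                · simp at hq; subst hq; exact hT (b, a) (by simp)
            · push_neg at hia2
              obtain ⟨m1, R1, hv1, he1, hL1, hT1, hB1⟩ :=
                append2 (Lsum S + (i - 2 + 1 - a)) S (i - 2) a le_rfl hvS ha1 (by omega)
                  (by omega) hbS
              refine ⟨m1, R1 ++ [(b, i)], ?_, ?_, ?_⟩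
              · refine hv1.append ?_ ?_ h1 hbi hbn
                · exact hT1 b (by omega) htS
                · exact hB1 i hai (fun q hq => lt_trans (hbS q hq) hai)
              · calc prodB n (S ++ [(b, a)]) * hT n i
                    = prodB n S * (block n b a * hT n i) := by
                      rw [prodB_append_single, mul_assoc]
                  _ = prodB n S * (block n b i * block n (i - 2) a) := by rw [hsp]
                  _ = prodB n S * (block n (i - 2) a * block n b i) := by rw [hcm.eq]
                  _ = (prodB n S * block n (i - 2) a) * block n b i := by rw [mul_assoc]
                  _ = (cK n ^ m1 * prodB n R1) * block n b i := by rw [he1]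
                  _ = cK n ^ m1 * prodB n (R1 ++ [(b, i)]) := by
                      rw [prodB_append_single R1 (b, i), mul_assoc]
              · intro t ht hT q hq
                rcases List.mem_append.1 hq with hq | hq
                · exact hT1 t (by omega) (fun p hp => hT p (List.mem_append_left _ hp)) q hq
                · simp at hq; subst hq; exact hT (b, a) (by simp)
          · push_neg at hai
            have hia' : i < a := by omega
            by_cases hia1 : i + 1 = a
            · -- extend the last block downwards
              have hext : block n b i = block n b a * hT n i := by
                have := block_bot (n := n) (i := b) (j := i) (le_trans (by omega) hab)
                rwa [hia1] at this
              obtain ⟨m, R', hv', he', hL', hTc, hBc⟩ :=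
                appendBig (Lsum S + (b + 1 - i)) S b i le_rfl hvS h1
                  (le_trans (by omega) hab) hbn htS
              refine ⟨m, R', hv', ?_, ?_⟩
              · calc prodB n (S ++ [(b, a)]) * hT n i
                    = prodB n S * (block n b a * hT n i) := by
                      rw [prodB_append_single, mul_assoc]
                  _ = prodB n S * block n b i := by rw [← hext]
                  _ = cK n ^ m * prodB n R' := he'
              · intro t ht hT q hq
                have hbt : b < t := hT (b, a) (by simp)
                exact lt_of_lt_of_le (hTc q hq) hbt
            · -- commute past the last block
              have hia2 : i + 2 ≤ a := by omega
              have hcm : Commute (hT n i) (block n b a) :=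
                commute_hT_block (Or.inl hia2)
              obtain ⟨m1, R1, hv1, he1, hT1⟩ :=
                ih S i (by simp at hμ; omega) hvS h1 h2
              obtain ⟨m2, R2, hv2, he2, hL2, hTc2, hBc2⟩ :=
                appendBig (Lsum R1 + (b + 1 - a)) R1 b a le_rfl hv1 ha1 hab hbn
                  (hT1 b (by omega) htS)
              refine ⟨m1 + m2, R2, hv2, ?_, ?_⟩
              · calc prodB n (S ++ [(b, a)]) * hT n i
                    = prodB n S * (block n b a * hT n i) := by
                      rw [prodB_append_single, mul_assoc]
                  _ = prodB n S * (hT n i * block n b a) := by rw [← hcm.eq]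
                  _ = (prodB n S * hT n i) * block n b a := by rw [mul_assoc]
                  _ = (cK n ^ m1 * prodB n R1) * block n b a := by rw [he1]
                  _ = cK n ^ m1 * (prodB n R1 * block n b a) := by rw [mul_assoc]
                  _ = cK n ^ m1 * (cK n ^ m2 * prodB n R2) := by rw [he2]
                  _ = cK n ^ (m1 + m2) * prodB n R2 := by rw [← mul_assoc, ← pow_add]
              · intro t ht hT q hq
                have hbt : b < t := hT (b, a) (by simp)
                exact lt_of_lt_of_le (hTc2 q hq) hbt

end KnNF
/-- Normal Form Lemma for `K_n`: every element of `K_n` is equal to an element in Jones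
normal form `c^l · h_{[b₁,a₁]} ⋯ h_{[b_k,a_k]}` with `l, k ≥ 0`, where `1 ≤ a_q ≤ b_q ≤ n - 1`
for each `q`, `a₁ < … < a_k` and `b₁ < … < b_k` (the empty product being `1`). -/
theorem Kn.jones_normal_form_exists (n : ℕ) (hn : 1 ≤ n) (x : Kn n) :
    ∃ (l : ℕ) (ps : List (ℕ × ℕ)),
      (∀ q ∈ ps, 1 ≤ q.2 ∧ q.2 ≤ q.1 ∧ q.1 < n) ∧
      List.Pairwise (· < ·) (ps.map Prod.snd) ∧
      List.Pairwise (· < ·) (ps.map Prod.fst) ∧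
      x = cK n ^ l * (ps.map fun q => block n q.1 q.2).prod := by
  obtain ⟨w, rfl⟩ := Con.mk'_surjective x
  suffices h : ∀ ll : List (KnGen n), ∃ (L : ℕ) (ps : List (ℕ × ℕ)), KnNF.Valid n ps ∧
      (KnCon n).mk' (FreeMonoid.ofList ll) = cK n ^ L * KnNF.prodB n ps by
    obtain ⟨L, ps, hv, he⟩ := h (FreeMonoid.toList w)
    refine ⟨L, ps, hv.1, hv.2.1, hv.2.2, ?_⟩
    rw [show w = FreeMonoid.ofList (FreeMonoid.toList w) from rfl]
    exact he
  intro ll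
  induction ll using List.reverseRecOn with
  | nil =>
    refine ⟨0, [], KnNF.valid_nil, ?_⟩
    rw [show FreeMonoid.ofList ([] : List (KnGen n)) = 1 from rfl, map_one]
    simp [KnNF.prodB]
  | append_singleton l g ihl =>
    obtain ⟨L, ps, hv, he⟩ := ihl
    have hsplit : (KnCon n).mk' (FreeMonoid.ofList (l ++ [g])) =
        (KnCon n).mk' (FreeMonoid.ofList l) * (KnCon n).mk' (FreeMonoid.of g) := by
      rw [← map_mul]; rfl
    cases g with
    | c =>
      refine ⟨L + 1, ps, hv, ?_⟩
      have hc : (KnCon n).mk' (FreeMonoid.of (KnGen.c : KnGen n)) = cK n := rfl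
      rw [hsplit, he, hc]
      calc cK n ^ L * KnNF.prodB n ps * cK n
          = cK n ^ L * (cK n * KnNF.prodB n ps) := by
            rw [mul_assoc, ← (KnNF.cK_comm_prodB ps).eq]
        _ = cK n ^ (L + 1) * KnNF.prodB n ps := by rw [← mul_assoc, ← pow_succ]
    | h i h1 h2 =>
      obtain ⟨m, ps', hv', he', _⟩ := KnNF.appendGen ps.length ps i le_rfl hv h1 h2
      refine ⟨L + m, ps', hv', ?_⟩
      have hh : (KnCon n).mk' (FreeMonoid.of (KnGen.h i h1 h2)) = hT n i :=
        (KnNF.hT_eq_hK h1 h2).symm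
      rw [hsplit, he, hh, mul_assoc, he', ← mul_assoc, ← pow_add]
end

section
/- (Balance Lemma) Let t and u be words in the free monoid on the generators δ_k, γ_k, and let ≈ be the smallest monoid congruence on this free monoid containing the defining relations of J_ω together with the pair (t, u). If w_1 ≈ w_2, then there is a natural number m with β(w_1, w_2) = m·β(t, u). -/
/-- The defining relations of the monoid `J_ω`: those of `L_ω` together with
`δ_k γ_k = 1` for every positive integer `k`. -/
def JRel (w₁ w₂ : LWord) : Prop :=
  LRel w₁ w₂ ∨ ∃ k : ℕ+, w₁ = cupW k * capW k ∧ w₂ = 1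

/-- The smallest monoid congruence containing the defining relations of `J_ω`. -/
def JCon : Con LWord := conGen JRel

/-- The smallest monoid congruence containing the defining relations of `J_ω`
together with the extra pair `(t, u)`; its quotient is the monoid `X` obtained from the
presentation of `J_ω` by adding the relation `t = u`. -/
def XCon (t u : LWord) : Con LWord :=
  conGen fun w₁ w₂ => JRel w₁ w₂ ∨ (w₁ = t ∧ w₂ = u)

/-- The number of occurrences of cup generators `δ_k` in a word. -/
def cups (w : LWord) : ℕ :=
  (FreeMonoid.toList w).countP fun g => match g with | .cup _ => true | .cap _ => false

/-- The number of occurrences of cap generators `γ_k` in a word. -/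
def caps (w : LWord) : ℕ :=
  (FreeMonoid.toList w).countP fun g => match g with | .cup _ => false | .cap _ => true

/-- The balance of a pair of words:
`β(w₁, w₂) = |(cups w₁ − caps w₁) − (cups w₂ − caps w₂)|`. -/
def balance (w₁ w₂ : LWord) : ℕ :=
  (((cups w₁ : ℤ) - (caps w₁ : ℤ)) - ((cups w₂ : ℤ) - (caps w₂ : ℤ))).natAbs


/-- The excess of cups over caps in a word. -/
def exc (w : LWord) : ℤ := (cups w : ℤ) - (caps w : ℤ)

lemma cups_mul (a b : LWord) : cups (a * b) = cups a + cups b := by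
  simp [cups, FreeMonoid.toList_mul, List.countP_append]

lemma caps_mul (a b : LWord) : caps (a * b) = caps a + caps b := by
  simp [caps, FreeMonoid.toList_mul, List.countP_append]

lemma exc_mul (a b : LWord) : exc (a * b) = exc a + exc b := by
  simp [exc, cups_mul, caps_mul]; ring

lemma exc_one : exc (1 : LWord) = 0 := rfl

lemma exc_cupW (k : ℕ+) : exc (cupW k) = 1 := rfl

lemma exc_capW (k : ℕ+) : exc (capW k) = -1 := rfl

lemma exc_LRel {a b : LWord} (h : LRel a b) : exc a = exc b := by
  cases h <;> simp [exc_mul, exc_one, exc_cupW, exc_capW]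

lemma exc_JRel {a b : LWord} (h : JRel a b) : exc a = exc b := by
  rcases h with h | ⟨k, rfl, rfl⟩
  · exact exc_LRel h
  · simp [exc_mul, exc_one, exc_cupW, exc_capW]

/-- Balance Lemma: if `≈` is the smallest monoid congruence on the free monoid on the cups
and caps containing the defining relations of `J_ω` together with the pair `(t, u)`, and
`w₁ ≈ w₂`, then `β(w₁, w₂) = m · β(t, u)` for some natural number `m`. -/
theorem balance_lemma (t u w₁ w₂ : LWord) (h : XCon t u w₁ w₂) :
    ∃ m : ℕ, balance w₁ w₂ = m * balance t u := by
  have key : ∃ z : ℤ, exc w₁ - exc w₂ = z * (exc t - exc u) := by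
    induction h with
    | of a b hab =>
        rcases hab with hab | ⟨rfl, rfl⟩
        · exact ⟨0, by rw [exc_JRel hab]; ring⟩
        · exact ⟨1, by ring⟩
    | refl a => exact ⟨0, by ring⟩
    | symm _ ih => rcases ih with ⟨z, hz⟩; exact ⟨-z, by linarith [hz]⟩
    | trans _ _ ih₁ ih₂ =>
        rcases ih₁ with ⟨z₁, h₁⟩; rcases ih₂ with ⟨z₂, h₂⟩
        exact ⟨z₁ + z₂, by rw [add_mul]; linarith⟩
    | mul _ _ ih₁ ih₂ =>
        rcases ih₁ with ⟨z₁, h₁⟩; rcases ih₂ with ⟨z₂, h₂⟩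
        exact ⟨z₁ + z₂, by simp only [exc_mul]; rw [add_mul]; linarith⟩
  rcases key with ⟨z, hz⟩
  refine ⟨z.natAbs, ?_⟩
  have : balance w₁ w₂ = (z * (exc t - exc u)).natAbs := by
    rw [balance, ← hz]; rfl
  rw [this, Int.natAbs_mul]; rfl
end

section
/- (Maximality of J_ω) Let t and u be words in the free monoid on the generators δ_k, γ_k whose images in J_ω are distinct, and let X be the monoid presented by the generators and defining relations of J_ω together with the additional relation t = u. Then X is isomorphic, as a monoid, to the additive monoid of integers modulo β(t, u) — that is, to (ℤ, +) when β(t, u) = 0, and to ℤ/nℤ when β(t, u) = n > 0. -/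
namespace JMax

/-! ### Indices -/

def pn (n : ℕ) : ℕ+ := ⟨n + 1, Nat.succ_pos n⟩

lemma pn_add_one (n : ℕ) : pn n + 1 = pn (n + 1) := rfl

lemma pn_add_two (n : ℕ) : pn n + 2 = pn (n + 2) := rfl

lemma pn_le {a b : ℕ} (h : a ≤ b) : pn a ≤ pn b := by
  exact (PNat.mk_le_mk _ _ _ _).2 (by omega)

lemma pn_natPred (k : ℕ+) : pn k.natPred = k := by
  exact Subtype.ext (PNat.natPred_add_one k)

/-! ### Words -/

def wd (n : ℕ) : LWord := cupW (pn n)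
def wg (n : ℕ) : LWord := capW (pn n)

lemma Jof {a b : LWord} (h : JRel a b) : JCon a b := ConGen.Rel.of _ _ h

lemma J_dd {l b : ℕ} (h : l ≤ b) : JCon (wd b * wd l) (wd l * wd (b + 2)) := by
  have := LRel.cup (k := pn b) (l := pn l) (pn_le h)
  rw [pn_add_two] at this
  exact Jof (Or.inl this)

lemma J_gg {l b : ℕ} (h : l ≤ b) : JCon (wg l * wg b) (wg (b + 2) * wg l) := by
  have := LRel.cap (k := pn b) (l := pn l) (pn_le h)
  rw [pn_add_two] at this
  exact Jof (Or.inl this)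

lemma J_dg₁ {b j : ℕ} (h : b ≤ j) : JCon (wd b * wg (j + 2)) (wg j * wd b) := by
  have := LRel.cupcap₁ (k := pn j) (l := pn b) (pn_le h)
  rw [pn_add_two] at this
  exact Jof (Or.inl this)

lemma J_dg₂ {l k : ℕ} (h : l ≤ k) : JCon (wd (k + 2) * wg l) (wg l * wd k) := by
  have := LRel.cupcap₂ (k := pn k) (l := pn l) (pn_le h)
  rw [pn_add_two] at this
  exact Jof (Or.inl this)

lemma J_cancel₁ (k : ℕ) : JCon (wd k * wg (k + 1)) 1 := by
  have := LRel.cupcap₃ (pn k)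
  rw [pn_add_one] at this
  exact Jof (Or.inl this)

lemma J_cancel₂ (k : ℕ) : JCon (wd (k + 1) * wg k) 1 := by
  have := LRel.cupcap₃' (pn k)
  rw [pn_add_one] at this
  exact Jof (Or.inl this)

lemma J_cancel₀ (k : ℕ) : JCon (wd k * wg k) 1 :=
  Jof (Or.inr ⟨pn k, rfl, rfl⟩)

/-- Cancellation `δ_b γ_j = 1` whenever `|b - j| ≤ 1`. -/
lemma J_cancel {b j : ℕ} (h1 : ¬ j + 2 ≤ b) (h2 : ¬ b + 2 ≤ j) : JCon (wd b * wg j) 1 := by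
  rcases Nat.lt_trichotomy b j with h | h | h
  · obtain rfl : j = b + 1 := by omega
    exact J_cancel₁ b
  · subst h; exact J_cancel₀ b
  · obtain rfl : b = j + 1 := by omega
    exact J_cancel₂ j

/-! ### The normal form machine -/

def insd (k : ℕ) : List ℕ → List ℕ
  | [] => [k]
  | b :: r => if b < k then k :: b :: r else (b + 2) :: insd k r

def insgR (j : ℕ) : List ℕ → List ℕ
  | [] => [j]
  | a :: r => if j < a then j :: a :: r else a :: insgR (j + 2) r

def insg (j : ℕ) (A : List ℕ) : List ℕ := (insgR j A.reverse).reverse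

def pushg (j : ℕ) : List ℕ → Option ℕ × List ℕ
  | [] => (some j, [])
  | b :: r =>
    if j + 2 ≤ b then ((pushg j r).1, insd (b - 2) (pushg j r).2)
    else if b + 2 ≤ j then ((pushg (j - 2) r).1, b :: (pushg (j - 2) r).2)
    else (none, r)

abbrev MState : Type := List ℕ × List ℕ

def stepM (s : MState) (g : LGen) : MState :=
  match g with
  | .cup k => (s.1, insd k.natPred s.2)
  | .cap j =>
    match pushg j.natPred s.2 with
    | (none, B') => (s.1, B')
    | (some j', B') => (insg j' s.1, B')

def runM (s : MState) (w : LWord) : MState := (FreeMonoid.toList w).foldl stepM s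

def nfM (w : LWord) : MState := runM ([], []) w

/-! ### Words of states -/

def gwd : List ℕ → LWord
  | [] => 1
  | a :: r => wg a * gwd r

def gwR : List ℕ → LWord
  | [] => 1
  | x :: s => gwR s * wg x

def dwd : List ℕ → LWord
  | [] => 1
  | b :: r => dwd r * wd b

def sw (s : MState) : LWord := gwd s.1 * dwd s.2

lemma gwR_append (s : List ℕ) (a : ℕ) : gwR (s ++ [a]) = wg a * gwR s := by
  induction s with
  | nil => simp [gwR]
  | cons x r ih => simp [gwR, ih, mul_assoc]

lemma gwd_eq_gwR (A : List ℕ) : gwd A = gwR A.reverse := by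
  induction A with
  | nil => rfl
  | cons a r ih => simp [gwd, ih, List.reverse_cons, gwR_append]

end JMax
namespace JMax

/-! ### Congruence helpers -/

lemma Jl {x y : LWord} (z : LWord) (h : JCon x y) : JCon (z * x) (z * y) :=
  JCon.mul (JCon.refl z) h

lemma Jr {x y : LWord} (z : LWord) (h : JCon x y) : JCon (x * z) (y * z) :=
  JCon.mul h (JCon.refl z)

/-! ### Correctness of the machine -/

lemma J_dw_insd (k : ℕ) (B : List ℕ) : JCon (dwd B * wd k) (dwd (insd k B)) := by
  induction B with
  | nil =>
      simp only [dwd, insd, one_mul]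
      exact JCon.refl _
  | cons b r ih =>
      by_cases h : b < k
      · simp only [insd, if_pos h]
        exact JCon.refl _
      · simp only [insd, if_neg h]
        push_neg at h
        have e1 : dwd (b :: r) * wd k = dwd r * (wd b * wd k) := by rw [dwd, mul_assoc]
        have e2 : dwd ((b + 2) :: insd k r) = dwd (insd k r) * wd (b + 2) := rfl
        rw [e1, e2]
        refine JCon.trans (Jl _ (J_dd h)) ?_
        rw [← mul_assoc]
        exact Jr _ ih

lemma J_gwR_insgR (j : ℕ) (L : List ℕ) : JCon (gwR L * wg j) (gwR (insgR j L)) := by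
  induction L generalizing j with
  | nil =>
      simp only [gwR, insgR, one_mul]
      exact JCon.refl _
  | cons x s ih =>
      by_cases h : j < x
      · simp only [insgR, if_pos h]
        exact JCon.refl _
      · simp only [insgR, if_neg h]
        push_neg at h
        have e1 : gwR (x :: s) * wg j = gwR s * (wg x * wg j) := by rw [gwR, mul_assoc]
        have e2 : gwR (x :: insgR (j + 2) s) = gwR (insgR (j + 2) s) * wg x := rfl
        rw [e1, e2]
        refine JCon.trans (Jl _ (J_gg h)) ?_
        rw [← mul_assoc]
        exact Jr _ (ih (j + 2))

lemma J_gw_insg (j : ℕ) (A : List ℕ) : JCon (gwd A * wg j) (gwd (insg j A)) := by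
  rw [gwd_eq_gwR, gwd_eq_gwR, insg, List.reverse_reverse]
  exact J_gwR_insgR j A.reverse

def owg : Option ℕ → LWord
  | none => 1
  | some j => wg j

lemma J_pushg (j : ℕ) (B : List ℕ) :
    JCon (dwd B * wg j) (owg (pushg j B).1 * dwd (pushg j B).2) := by
  induction B generalizing j with
  | nil =>
      simp only [dwd, pushg, owg, one_mul, mul_one]
      exact JCon.refl _
  | cons b r ih =>
      by_cases h1 : j + 2 ≤ b
      · simp only [pushg, if_pos h1]
        have hb : b - 2 + 2 = b := by omega
        have hj : j ≤ b - 2 := by omega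
        have hrel : JCon (wd b * wg j) (wg j * wd (b - 2)) := by
          have := J_dg₂ hj; rwa [hb] at this
        have e1 : dwd (b :: r) * wg j = dwd r * (wd b * wg j) := by rw [dwd, mul_assoc]
        rw [e1]
        refine JCon.trans (Jl _ hrel) ?_
        rw [← mul_assoc]
        refine JCon.trans (Jr _ (ih j)) ?_
        rw [mul_assoc]
        exact Jl _ (J_dw_insd _ _)
      · by_cases h2 : b + 2 ≤ j
        · simp only [pushg, if_neg h1, if_pos h2]
          have hj : j - 2 + 2 = j := by omega
          have hb : b ≤ j - 2 := by omega
          have hrel : JCon (wd b * wg j) (wg (j - 2) * wd b) := by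
            have := J_dg₁ hb; rwa [hj] at this
          have e1 : dwd (b :: r) * wg j = dwd r * (wd b * wg j) := by rw [dwd, mul_assoc]
          rw [e1]
          refine JCon.trans (Jl _ hrel) ?_
          rw [← mul_assoc]
          refine JCon.trans (Jr _ (ih (j - 2))) ?_
          rw [mul_assoc]
          exact JCon.refl _
        · simp only [pushg, if_neg h1, if_neg h2, owg, one_mul]
          have e1 : dwd (b :: r) * wg j = dwd r * (wd b * wg j) := by rw [dwd, mul_assoc]
          rw [e1]
          refine JCon.trans (Jl _ (J_cancel h1 h2)) ?_
          rw [mul_one]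
          exact JCon.refl _

lemma of_cup (k : ℕ+) : FreeMonoid.of (LGen.cup k) = wd k.natPred := by
  rw [wd, pn_natPred]; rfl

lemma of_cap (k : ℕ+) : FreeMonoid.of (LGen.cap k) = wg k.natPred := by
  rw [wg, pn_natPred]; rfl

lemma J_step (s : MState) (g : LGen) : JCon (sw s * FreeMonoid.of g) (sw (stepM s g)) := by
  obtain ⟨A, B⟩ := s
  cases g with
  | cup k =>
      rw [of_cup]
      show JCon (gwd A * dwd B * wd k.natPred) (gwd A * dwd (insd k.natPred B))
      rw [mul_assoc]
      exact Jl _ (J_dw_insd _ _)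
  | cap k =>
      rw [of_cap]
      have corr := J_pushg k.natPred B
      rcases hp : pushg k.natPred B with ⟨o, B'⟩
      rw [hp] at corr
      simp only [stepM, hp]
      cases o with
      | none =>
          show JCon (gwd A * dwd B * wg k.natPred) (sw (A, B'))
          rw [mul_assoc]
          refine JCon.trans (Jl _ corr) ?_
          simp only [owg, one_mul]
          exact JCon.refl _
      | some j' =>
          show JCon (gwd A * dwd B * wg k.natPred) (sw (insg j' A, B'))
          rw [mul_assoc]
          refine JCon.trans (Jl _ corr) ?_
          have e : gwd A * (owg (some j') * dwd B') = (gwd A * wg j') * dwd B' := by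
            rw [owg, mul_assoc]
          rw [e]
          exact Jr _ (J_gw_insg _ _)

lemma J_runList (l : List LGen) : ∀ s : MState,
    JCon (sw s * FreeMonoid.ofList l) (sw (List.foldl stepM s l)) := by
  induction l with
  | nil =>
      intro s
      show JCon (sw s * 1) _
      rw [mul_one]
      exact JCon.refl _
  | cons g l ih =>
      intro s
      have h1 : FreeMonoid.ofList (g :: l) = FreeMonoid.of g * FreeMonoid.ofList l := rfl
      rw [h1, ← mul_assoc, List.foldl_cons]
      exact JCon.trans (Jr _ (J_step s g)) (ih _)

lemma J_nf (w : LWord) : JCon w (sw (nfM w)) := by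
  have h := J_runList (FreeMonoid.toList w) ([], [])
  have h1 : sw ([], []) = 1 := by simp [sw, gwd, dwd]
  rw [h1, one_mul, FreeMonoid.ofList_toList] at h
  exact h

end JMax
namespace JMax

lemma natPred_pn (n : ℕ) : (pn n).natPred = n := rfl

/-! ### Sortedness invariants -/

abbrev Dec (L : List ℕ) : Prop := List.Pairwise (· > ·) L

lemma insd_mem {x k : ℕ} {L : List ℕ} (h : x ∈ insd k L) :
    x = k ∨ ∃ y ∈ L, x = y ∨ x = y + 2 := by
  induction L with
  | nil => simp [insd] at h; exact Or.inl h
  | cons b r ih =>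
      by_cases hb : b < k
      · simp only [insd, if_pos hb, List.mem_cons] at h
        rcases h with h | h | h
        · exact Or.inl h
        · exact Or.inr ⟨b, by simp, Or.inl h⟩
        · exact Or.inr ⟨x, by simp [h], Or.inl rfl⟩
      · simp only [insd, if_neg hb, List.mem_cons] at h
        rcases h with h | h
        · exact Or.inr ⟨b, by simp, Or.inr h⟩
        · rcases ih h with h' | ⟨y, hy, h'⟩
          · exact Or.inl h'
          · exact Or.inr ⟨y, by simp [hy], h'⟩

lemma insd_sorted {k : ℕ} {L : List ℕ} (h : Dec L) : Dec (insd k L) := by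
  induction L with
  | nil => simp [insd]
  | cons b r ih =>
      rcases List.pairwise_cons.1 h with ⟨hb, hr⟩
      by_cases hbk : b < k
      · simp only [insd, if_pos hbk]
        refine List.pairwise_cons.2 ⟨?_, h⟩
        intro x hx
        rcases List.mem_cons.1 hx with rfl | hx
        · exact hbk
        · exact lt_trans (hb x hx) hbk
      · simp only [insd, if_neg hbk]
        push_neg at hbk
        refine List.pairwise_cons.2 ⟨?_, ih hr⟩
        intro x hx
        rcases insd_mem hx with rfl | ⟨y, hy, h' | h'⟩
        · omega
        · have := hb y hy; omega
        · have := hb y hy; omega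

lemma insgR_mem {x j : ℕ} {L : List ℕ} (h : x ∈ insgR j L) : j ≤ x ∨ x ∈ L := by
  induction L generalizing j with
  | nil => simp [insgR] at h; omega
  | cons a r ih =>
      by_cases ha : j < a
      · simp only [insgR, if_pos ha, List.mem_cons] at h
        rcases h with rfl | h
        · exact Or.inl le_rfl
        · exact Or.inr (by simpa using h)
      · simp only [insgR, if_neg ha, List.mem_cons] at h
        rcases h with rfl | h
        · exact Or.inr (by simp)
        · rcases ih h with h' | h'
          · exact Or.inl (by omega)
          · exact Or.inr (by simp [h'])

lemma insgR_sorted {j : ℕ} {L : List ℕ} (h : List.Pairwise (· < ·) L) :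
    List.Pairwise (· < ·) (insgR j L) := by
  induction L generalizing j with
  | nil => simp [insgR]
  | cons a r ih =>
      rcases List.pairwise_cons.1 h with ⟨ha, hr⟩
      by_cases haj : j < a
      · simp only [insgR, if_pos haj]
        refine List.pairwise_cons.2 ⟨?_, h⟩
        intro x hx
        rcases List.mem_cons.1 hx with rfl | hx
        · exact haj
        · exact lt_trans haj (ha x hx)
      · simp only [insgR, if_neg haj]
        push_neg at haj
        refine List.pairwise_cons.2 ⟨?_, ih hr⟩
        intro x hx
        rcases insgR_mem hx with h' | h'
        · omega
        · exact ha x h'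

lemma insg_sorted {j : ℕ} {A : List ℕ} (h : Dec A) : Dec (insg j A) := by
  rw [insg]
  apply List.pairwise_reverse.2
  exact insgR_sorted (List.pairwise_reverse.2 h)

/-! ### Low pushes -/

lemma pushg_low {j : ℕ} {L : List ℕ} (hs : Dec L) (hlt : ∀ x ∈ L, x < j) :
    (∃ P e R, L = P ++ e :: R ∧ e + 2 * P.length + 1 = j ∧ pushg j L = (none, P ++ R))
    ∨ (∃ j', j = j' + 2 * L.length ∧ pushg j L = (some j', L)) := by
  induction L generalizing j with
  | nil => exact Or.inr ⟨j, by simp, by simp [pushg]⟩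
  | cons b r ih =>
      rcases List.pairwise_cons.1 hs with ⟨hb, hr⟩
      have hbj : b < j := hlt b (by simp)
      have h1 : ¬ j + 2 ≤ b := by omega
      by_cases h2 : b + 2 ≤ j
      · have hlt' : ∀ x ∈ r, x < j - 2 := by
          intro x hx
          have := hb x hx
          omega
        rcases ih hr hlt' with ⟨P, e, R, hsplit, heq, hres⟩ | ⟨j', heq, hres⟩
        · refine Or.inl ⟨b :: P, e, R, by rw [hsplit]; simp, by simp; omega, ?_⟩
          simp only [pushg, if_neg h1, if_pos h2, hres]
          simp
        · refine Or.inr ⟨j', by simp; omega, ?_⟩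
          simp only [pushg, if_neg h1, if_pos h2, hres]
      · have hj : b + 1 = j := by omega
        refine Or.inl ⟨[], b, r, by simp, by simp; omega, ?_⟩
        simp only [pushg, if_neg h1, if_neg h2]
        simp

lemma pushg_sorted {j : ℕ} {L : List ℕ} (hs : Dec L) : Dec (pushg j L).2 := by
  induction L generalizing j with
  | nil => simp [pushg]
  | cons b r ih =>
      rcases List.pairwise_cons.1 hs with ⟨hb, hr⟩
      by_cases h1 : j + 2 ≤ b
      · simp only [pushg, if_pos h1]
        exact insd_sorted (ih hr)
      · by_cases h2 : b + 2 ≤ j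
        · simp only [pushg, if_neg h1, if_pos h2]
          have hlt' : ∀ x ∈ r, x < j - 2 := by
            intro x hx
            have := hb x hx
            omega
          rcases pushg_low hr hlt' with ⟨P, e, R, hsplit, heq, hres⟩ | ⟨j', heq, hres⟩
          · rw [hres]
            refine List.pairwise_cons.2 ⟨?_, ?_⟩
            · intro x hx
              apply hb
              rw [hsplit]
              rcases List.mem_append.1 hx with h | h
              · exact List.mem_append.2 (Or.inl h)
              · exact List.mem_append.2 (Or.inr (List.mem_cons_of_mem _ h))
            · have : (P ++ R).Sublist (P ++ e :: R) := by
                apply List.Sublist.append_left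
                exact List.sublist_cons_self e R
              rw [hsplit] at hr
              exact List.Pairwise.sublist this hr
          · rw [hres]
            exact hs
        · simp only [pushg, if_neg h1, if_neg h2]
          exact hr

lemma stepM_sorted {s : MState} (h1 : Dec s.1) (h2 : Dec s.2) (g : LGen) :
    Dec (stepM s g).1 ∧ Dec (stepM s g).2 := by
  obtain ⟨A, B⟩ := s
  cases g with
  | cup k => exact ⟨h1, insd_sorted h2⟩
  | cap k =>
      have hp := pushg_sorted (j := k.natPred) h2
      rcases hq : pushg k.natPred B with ⟨o, B'⟩
      rw [hq] at hp
      cases o with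
      | none =>
          simp only [stepM, hq]
          exact ⟨h1, hp⟩
      | some j' =>
          simp only [stepM, hq]
          exact ⟨insg_sorted h1, hp⟩

lemma foldl_sorted (l : List LGen) : ∀ s : MState, Dec s.1 → Dec s.2 →
    Dec (List.foldl stepM s l).1 ∧ Dec (List.foldl stepM s l).2 := by
  induction l with
  | nil => intro s h1 h2; exact ⟨h1, h2⟩
  | cons g l ih =>
      intro s h1 h2
      rw [List.foldl_cons]
      have := stepM_sorted h1 h2 g
      exact ih _ this.1 this.2

lemma nfM_sorted (w : LWord) : Dec (nfM w).1 ∧ Dec (nfM w).2 :=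
  foldl_sorted _ _ (by simp) (by simp)

end JMax
namespace JMax

def capL (n : ℕ) : LGen := LGen.cap (pn n)
def cupL (n : ℕ) : LGen := LGen.cup (pn n)

lemma toList_gwd (A : List ℕ) : (gwd A).toList = A.map capL := by
  induction A with
  | nil => rfl
  | cons a r ih => simp [gwd, FreeMonoid.toList_mul, ih, wg, capW, capL]

lemma toList_dwd (B : List ℕ) : (dwd B).toList = B.reverse.map cupL := by
  induction B with
  | nil => rfl
  | cons b r ih => simp [dwd, FreeMonoid.toList_mul, ih, wd, cupW, cupL]

lemma toList_sw (s : MState) : (sw s).toList = s.1.map capL ++ s.2.reverse.map cupL := by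
  rw [sw, FreeMonoid.toList_mul, toList_gwd, toList_dwd]

lemma stepM_cup (s : MState) (n : ℕ) : stepM s (cupL n) = (s.1, insd n s.2) := by
  simp [stepM, cupL, natPred_pn]

lemma stepM_cap_none {s : MState} {n : ℕ} {B' : List ℕ} (hp : pushg n s.2 = (none, B')) :
    stepM s (capL n) = (s.1, B') := by
  simp [stepM, capL, natPred_pn, hp]

lemma stepM_cap_some {s : MState} {n j' : ℕ} {B' : List ℕ} (hp : pushg n s.2 = (some j', B')) :
    stepM s (capL n) = (insg j' s.1, B') := by
  simp [stepM, capL, natPred_pn, hp]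

def BinsF (acc : List ℕ) (B : List ℕ) : List ℕ := List.foldl (fun a k => insd k a) acc B.reverse

lemma feed_delta (l : List ℕ) : ∀ s : MState,
    List.foldl stepM s (l.map cupL) = (s.1, List.foldl (fun a k => insd k a) s.2 l) := by
  induction l with
  | nil => intro s; rfl
  | cons b r ih =>
      intro s
      rw [List.map_cons, List.foldl_cons, stepM_cup, ih, List.foldl_cons]

lemma insd_prepend {k : ℕ} {L : List ℕ} (h : ∀ x ∈ L, x < k) : insd k L = k :: L := by
  cases L with
  | nil => rfl
  | cons b r => simp [insd, h b (by simp)]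

lemma BinsF_nil_sorted {B : List ℕ} (h : Dec B) : BinsF [] B = B := by
  induction B with
  | nil => rfl
  | cons b r ih =>
      rcases List.pairwise_cons.1 h with ⟨hb, hr⟩
      rw [BinsF, List.reverse_cons, List.foldl_append]
      rw [BinsF] at ih
      rw [ih hr]
      simp only [List.foldl_cons, List.foldl_nil]
      exact insd_prepend fun x hx => hb x hx

lemma insg_append {j : ℕ} {RA : List ℕ} (h : ∀ x ∈ RA, j < x) : insg j RA = RA ++ [j] := by
  rw [insg]
  rcases hR : RA.reverse with _ | ⟨x, s⟩
  · have : RA = [] := by simpa using congrArg List.reverse hR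
    subst this
    rfl
  · have hx : x ∈ RA := by
      have : x ∈ RA.reverse := by rw [hR]; simp
      simpa using this
    rw [insgR, if_pos (h x hx)]
    have : RA = (x :: s).reverse := by
      rw [← hR, List.reverse_reverse]
    rw [this]
    simp

lemma feed_gamma_empty (R : List ℕ) : ∀ RA : List ℕ, Dec R → (∀ x ∈ RA, ∀ a ∈ R, a < x) →
    List.foldl stepM (RA, []) (R.map capL) = (RA ++ R, []) := by
  induction R with
  | nil => intro RA _ _; simp
  | cons a R' ih =>
      intro RA hdec hlt
      rcases List.pairwise_cons.1 hdec with ⟨ha, hR'⟩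
      have hpp : pushg a (RA, ([] : List ℕ)).2 = (some a, []) := rfl
      rw [List.map_cons, List.foldl_cons, stepM_cap_some hpp]
      show List.foldl stepM (insg a RA, []) (R'.map capL) = (RA ++ a :: R', [])
      rw [insg_append (fun x hx => hlt x hx a (by simp))]
      rw [ih (RA ++ [a]) hR' ?_]
      · simp
      · intro x hx b hb
        rcases List.mem_append.1 hx with hx | hx
        · exact hlt x hx b (by simp [hb])
        · simp at hx
          subst hx
          exact ha b hb

lemma scanfeed (A : List ℕ) : ∀ (j : ℕ) (RA : List ℕ), Dec A → (∀ x ∈ A, x < j) →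
    (∀ x ∈ RA, ∀ a ∈ A, a < x) →
    (∃ P e R, A = P ++ e :: R ∧ e + 2 * P.length + 1 = j ∧
      List.foldl stepM (RA, [j]) (A.map capL) = (RA ++ (P ++ R), []))
    ∨ (∃ j', j = j' + 2 * A.length ∧
      List.foldl stepM (RA, [j]) (A.map capL) = (RA ++ A, [j'])) := by
  induction A with
  | nil =>
      intro j RA _ _ _
      exact Or.inr ⟨j, by simp, by simp⟩
  | cons a A' ih =>
      intro j RA hdec hlt hRA
      rcases List.pairwise_cons.1 hdec with ⟨ha, hA'⟩
      have haj : a < j := hlt a (by simp)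
      rw [List.map_cons, List.foldl_cons]
      by_cases h2 : a + 2 ≤ j
      · have hpush : pushg a (RA, [j]).2 = (some a, [j - 2]) := by
          show pushg a [j] = _
          simp only [pushg, if_pos h2]
          rfl
        rw [stepM_cap_some hpush]
        have step1 : insg a (RA, [j]).1 = RA ++ [a] :=
          insg_append (fun x hx => hRA x hx a (by simp))
        rw [step1]
        have hlt' : ∀ x ∈ A', x < j - 2 := by
          intro x hx
          have := ha x hx
          omega
        have hRA' : ∀ x ∈ RA ++ [a], ∀ b ∈ A', b < x := by
          intro x hx b hb
          rcases List.mem_append.1 hx with hx | hx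
          · exact hRA x hx b (by simp [hb])
          · simp at hx; subst hx; exact ha b hb
        rcases ih (j - 2) (RA ++ [a]) hA' hlt' hRA' with
          ⟨P, e, R, hsplit, heq, hres⟩ | ⟨j', heq, hres⟩
        · refine Or.inl ⟨a :: P, e, R, by rw [hsplit]; rfl, by simp; omega, ?_⟩
          rw [hres]
          simp
        · refine Or.inr ⟨j', by simp; omega, ?_⟩
          rw [hres]
          simp
      · have hj : a + 1 = j := by omega
        have hpush : pushg a (RA, [j]).2 = (none, []) := by
          show pushg a [j] = _
          simp only [pushg]
          rw [if_neg (by omega : ¬ a + 2 ≤ j), if_neg (by omega : ¬ j + 2 ≤ a)]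
        rw [stepM_cap_none hpush]
        refine Or.inl ⟨[], a, A', by simp, by simp; omega, ?_⟩
        show List.foldl stepM (RA, []) (A'.map capL) = (RA ++ ([] ++ A'), [])
        rw [feed_gamma_empty A' RA hA' ?_]
        · simp
        · intro x hx b hb
          exact hRA x hx b (by simp [hb])

def deld (k : ℕ) : List ℕ → List ℕ
  | [] => []
  | x :: s => if x = k then s else (x - 2) :: deld k s

lemma deld_insd (k : ℕ) (L : List ℕ) : deld k (insd k L) = L := by
  induction L with
  | nil => simp [insd, deld]
  | cons b r ih =>
      by_cases h : b < k
      · simp [insd, if_pos h, deld]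
      · have : ¬ (b + 2 = k) := by omega
        simp [insd, if_neg h, deld, this, ih]

lemma insd_injective (k : ℕ) {L L' : List ℕ} (h : insd k L = insd k L') : L = L' := by
  have := congrArg (deld k) h
  rwa [deld_insd, deld_insd] at this

lemma insd_length (k : ℕ) (L : List ℕ) : (insd k L).length = L.length + 1 := by
  induction L with
  | nil => rfl
  | cons b r ih =>
      by_cases h : b < k
      · simp [insd, if_pos h]
      · simp [insd, if_neg h, ih]

lemma foldl_insd_length (l : List ℕ) : ∀ acc : List ℕ,
    (List.foldl (fun a k => insd k a) acc l).length = acc.length + l.length := by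
  induction l with
  | nil => intro acc; simp
  | cons k l ih =>
      intro acc
      rw [List.foldl_cons, ih, insd_length]
      simp only [List.length_cons]
      omega

lemma BinsF_length (acc B : List ℕ) : (BinsF acc B).length = acc.length + B.length := by
  rw [BinsF, foldl_insd_length, List.length_reverse]

lemma foldr_insd_inj (l : List ℕ) {L L' : List ℕ}
    (h : List.foldr insd L l = List.foldr insd L' l) : L = L' := by
  induction l with
  | nil => exact h
  | cons k l ih =>
      simp only [List.foldr_cons] at h
      exact ih (insd_injective k h)

lemma BinsF_inj (B : List ℕ) {r r' : ℕ}
    (h : BinsF [r] B = BinsF [r'] B) : r = r' := by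
  rw [BinsF, BinsF, List.foldl_reverse] at h
  have := foldr_insd_inj B (by simpa using h)
  simpa using this

end JMax
namespace JMax

set_option linter.unusedSectionVars false

/-- The right killer word of a `δ`-list. -/
def kil : List ℕ → LWord
  | [] => 1
  | b :: r => wg (b + 1) * kil r

lemma J_kil (B : List ℕ) : JCon (dwd B * kil B) 1 := by
  induction B with
  | nil => rw [dwd, kil, one_mul]; exact JCon.refl 1
  | cons b r ih =>
      have e : dwd (b :: r) * kil (b :: r) = dwd r * ((wd b * wg (b + 1)) * kil r) := by
        simp only [dwd, kil, mul_assoc]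
      rw [e]
      refine JCon.trans ?_ ih
      refine Jl _ ?_
      refine JCon.trans (Jr _ (J_cancel₁ b)) ?_
      rw [one_mul]
      exact JCon.refl _

lemma insg_length (j : ℕ) (A : List ℕ) : (insg j A).length = A.length + 1 := by
  rw [insg, List.length_reverse]
  have : ∀ (L : List ℕ) (j : ℕ), (insgR j L).length = L.length + 1 := by
    intro L
    induction L with
    | nil => intro j; rfl
    | cons a r ih =>
        intro j
        by_cases h : j < a
        · simp [insgR, if_pos h]
        · simp [insgR, if_neg h, ih]
    
  rw [this, List.length_reverse]

lemma stepM_ra_mono (s : MState) (g : LGen) : s.1.length ≤ (stepM s g).1.length := by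
  obtain ⟨A, B⟩ := s
  cases g with
  | cup k => exact le_rfl
  | cap k =>
      rcases hq : pushg k.natPred B with ⟨o, B'⟩
      cases o with
      | none => simp [stepM, hq]
      | some j' =>
          simp only [stepM, hq]
          rw [insg_length]
          omega

lemma foldl_ra_mono (l : List LGen) : ∀ s : MState, s.1.length ≤ (List.foldl stepM s l).1.length := by
  induction l with
  | nil => intro s; exact le_rfl
  | cons g l ih =>
      intro s
      exact le_trans (stepM_ra_mono s g) (ih _)


section Theta

variable {θ : Con LWord} (hJ : ∀ {a b : LWord}, JCon a b → θ a b)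

include hJ

/-- The collapse property: some `γ_a δ_b = 1` holds. -/
def Collapse (θ : Con LWord) : Prop := ∃ a b : ℕ, θ (wg a * wd b) 1

lemma unitL {x y z : LWord} (h1 : θ (x * y) 1) (h2 : JCon (z * x) 1) : θ (x * z) 1 := by
  have hyz : θ y z := by
    have s1 : θ (1 * y) ((z * x) * y) := θ.mul (θ.symm (hJ h2)) (θ.refl y)
    rw [one_mul, mul_assoc] at s1
    have s2 : θ (z * (x * y)) (z * 1) := θ.mul (θ.refl z) h1
    rw [mul_one] at s2
    exact θ.trans s1 s2
  exact θ.trans (θ.mul (θ.refl x) (θ.symm hyz)) h1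

lemma unitR {x y z : LWord} (h1 : θ (y * x) 1) (h2 : JCon (x * z) 1) : θ (z * x) 1 := by
  have hzy : θ z y := by
    have s1 : θ (y * 1) (y * (x * z)) := θ.mul (θ.refl y) (θ.symm (hJ h2))
    rw [mul_one, ← mul_assoc] at s1
    have s2 : θ ((y * x) * z) (1 * z) := θ.mul h1 (θ.refl z)
    rw [one_mul] at s2
    exact θ.symm (θ.trans s1 s2)
  exact θ.trans (θ.mul hzy (θ.refl x)) h1

lemma collapse_of_gamma_head (a : ℕ) (REST : LWord) (h : θ (wg a * REST) 1) : Collapse θ :=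
  ⟨a, a + 1, unitL hJ h (J_cancel₂ a)⟩

lemma collapse_of_pure_delta {B : List ℕ} (hne : B ≠ []) (h : θ (dwd B) 1) : Collapse θ := by
  cases B with
  | nil => exact absurd rfl hne
  | cons b r =>
      exact ⟨b + 1, b, unitR hJ (x := wd b) (y := dwd r) h (J_cancel₁ b)⟩

lemma collapse_of_one {s : MState} (hne : s ≠ ([], [])) (h : θ (sw s) 1) : Collapse θ := by
  obtain ⟨A, B⟩ := s
  cases A with
  | cons a A' =>
      apply collapse_of_gamma_head hJ a (gwd A' * dwd B)
      have e : sw (a :: A', B) = wg a * (gwd A' * dwd B) := by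
        rw [sw, gwd, mul_assoc]
      rwa [e] at h
  | nil =>
      have hB : B ≠ [] := by
        intro hB
        exact hne (by rw [hB])
      apply collapse_of_pure_delta hJ hB
      have e : sw (([] : List ℕ), B) = dwd B := by rw [sw, gwd, one_mul]
      rwa [e] at h






lemma terminal_mixed {A₁ B₁ B₂ : List ℕ} (hA : A₁ ≠ [])
    (h : θ (sw (A₁, B₁)) (sw (([] : List ℕ), B₂))) : Collapse θ := by
  -- multiply both sides by the killer of B₂
  have h2 : θ (sw (A₁, B₁) * kil B₂) (sw (([] : List ℕ), B₂) * kil B₂) :=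
    θ.mul h (θ.refl _)
  have hkill : JCon (sw (([] : List ℕ), B₂) * kil B₂) 1 := by
    have e : sw (([] : List ℕ), B₂) = dwd B₂ := by rw [sw, gwd, one_mul]
    rw [e]
    exact J_kil B₂
  set M := List.foldl stepM (A₁, B₁) (kil B₂).toList with hM
  have hcorr : JCon (sw (A₁, B₁) * kil B₂) (sw M) := by
    have := J_runList (kil B₂).toList (A₁, B₁)
    rwa [FreeMonoid.ofList_toList] at this
  have hθM : θ (sw M) 1 :=
    θ.trans (θ.symm (hJ hcorr)) (θ.trans h2 (hJ hkill))
  have hMne : M ≠ ([], []) := by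
    intro hcontra
    have := foldl_ra_mono (kil B₂).toList (A₁, B₁)
    rw [← hM, hcontra] at this
    simp at this
    cases A₁ with
    | nil => exact hA rfl
    | cons x y => simp at this
  exact collapse_of_one hJ hMne hθM

end Theta

end JMax
namespace JMax

lemma of_capL (n : ℕ) : FreeMonoid.of (capL n) = wg n := rfl
lemma of_cupL (n : ℕ) : FreeMonoid.of (cupL n) = wd n := rfl

lemma J_rightprobe (s : MState) (j : ℕ) : JCon (sw s * wg j) (sw (stepM s (capL j))) := by
  have := J_step s (capL j)
  rwa [of_capL] at this

def probeL (j : ℕ) (s : MState) : MState := List.foldl stepM ([], [j]) (sw s).toList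

lemma J_leftprobe (j : ℕ) (s : MState) : JCon (wd j * sw s) (sw (probeL j s)) := by
  have h := J_runList (sw s).toList ([], [j])
  rw [FreeMonoid.ofList_toList] at h
  have e : sw (([], [j]) : MState) = wd j := by
    rw [sw, gwd, dwd, dwd, one_mul, one_mul]
  rwa [e] at h

lemma BinsF_sorted {acc : List ℕ} (B : List ℕ) (h : Dec acc) : Dec (BinsF acc B) := by
  rw [BinsF]
  generalize B.reverse = l
  induction l generalizing acc with
  | nil => exact h
  | cons k l ih => exact ih (insd_sorted h)

lemma stepM_cancel_head {A : List ℕ} {b j : ℕ} (r : List ℕ)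
    (h1 : ¬ j + 2 ≤ b) (h2 : ¬ b + 2 ≤ j) :
    stepM (A, b :: r) (capL j) = (A, r) := by
  apply stepM_cap_none
  show pushg j (b :: r) = _
  simp only [pushg, if_neg h1, if_neg h2]

/-- Computation of a left probe `δ_j` against a state with γ-head `a`, for `j = a` or
`j = a+1`: the head is cancelled exactly. -/
lemma probeL_head {a j : ℕ} {A' B : List ℕ} (hj : j = a ∨ j = a + 1)
    (hA : Dec (a :: A')) (hB : Dec B) : probeL j (a :: A', B) = (A', B) := by
  rw [probeL, toList_sw]
  show List.foldl stepM ([], [j]) ((capL a :: A'.map capL) ++ B.reverse.map cupL) = _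
  rw [List.foldl_append, List.foldl_cons]
  have hp : pushg a (([] : List ℕ), [j]).2 = (none, []) := by
    show pushg a [j] = _
    have c1 : ¬ a + 2 ≤ j := by omega
    have c2 : ¬ j + 2 ≤ a := by omega
    simp only [pushg, if_neg c1, if_neg c2]
  rw [stepM_cap_none hp]
  rcases List.pairwise_cons.1 hA with ⟨ha, hA'⟩
  rw [feed_gamma_empty A' [] hA' (by simp)]
  rw [feed_delta]
  simp only [List.nil_append]
  show (A', BinsF [] B) = (A', B)
  rw [BinsF_nil_sorted hB]

/-- Computation of a left probe `δ_j` against a state `(A₂, B₂)` whose γ-entries are all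
below `j`. -/
lemma probeL_scan {j : ℕ} {A₂ B₂ : List ℕ} (hA : Dec A₂) (hB : Dec B₂)
    (hlt : ∀ x ∈ A₂, x < j) :
    (∃ P e R, A₂ = P ++ e :: R ∧ e + 2 * P.length + 1 = j ∧
        probeL j (A₂, B₂) = (P ++ R, B₂))
    ∨ (∃ j₀, j = j₀ + 2 * A₂.length ∧ probeL j (A₂, B₂) = (A₂, BinsF [j₀] B₂)) := by
  rw [probeL, toList_sw]
  show _ ∨ _
  rcases scanfeed A₂ j [] hA hlt (by simp) with ⟨P, e, R, hsplit, heq, hres⟩ | ⟨j₀, heq, hres⟩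
  · refine Or.inl ⟨P, e, R, hsplit, heq, ?_⟩
    show List.foldl stepM ([], [j]) (A₂.map capL ++ B₂.reverse.map cupL) = _
    rw [List.foldl_append, hres, feed_delta]
    show (([] : List ℕ) ++ (P ++ R), BinsF [] B₂) = _
    rw [BinsF_nil_sorted hB]
    simp
  · refine Or.inr ⟨j₀, heq, ?_⟩
    show List.foldl stepM ([], [j]) (A₂.map capL ++ B₂.reverse.map cupL) = _
    rw [List.foldl_append, hres, feed_delta]
    simp [BinsF]

lemma sum_split (P R : List ℕ) (e : ℕ) : (P ++ e :: R).sum = (P ++ R).sum + e := by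
  simp [List.sum_append, List.sum_cons]
  omega

end JMax
namespace JMax

set_option linter.unusedSectionVars false

section EXT

variable {θ : Con LWord}

/-- Abbreviation for the extraction induction hypothesis. -/
def IHtype (θ : Con LWord) (N : ℕ) : Prop :=
  ∀ s₁ s₂ : MState,
    2 * (s₁.1.length + s₂.1.length) + (s₁.2.length + s₂.2.length) ≤ N →
    Dec s₁.1 → Dec s₁.2 → Dec s₂.1 → Dec s₂.2 →
    s₁ ≠ s₂ → θ (sw s₁) (sw s₂) → Collapse θ

lemma dec_of_split {A P R : List ℕ} {e : ℕ} (h : Dec A) (hs : A = P ++ e :: R) :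
    Dec (P ++ R) := by
  have : (P ++ R).Sublist A := by
    rw [hs]
    exact List.Sublist.append_left (List.sublist_cons_self e R) P
  exact List.Pairwise.sublist this h

lemma len_of_split {A P R : List ℕ} {e : ℕ} (hs : A = P ++ e :: R) :
    A.length = P.length + R.length + 1 := by
  subst hs; simp; omega

lemma e_of_split {A P R : List ℕ} {e : ℕ} (hs : A = P ++ e :: R) :
    A.sum = (P ++ R).sum + e := by
  subst hs; exact sum_split P R e

lemma sw_nil : sw (([], []) : MState) = 1 := by
  rw [sw, gwd, dwd, one_mul]

variable (hJ : ∀ {a b : LWord}, JCon a b → θ a b)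

include hJ

lemma theta_rightprobe {s₁ s₂ M₁ M₂ : MState} {j : ℕ}
    (h₁ : stepM s₁ (capL j) = M₁) (h₂ : stepM s₂ (capL j) = M₂)
    (hθ : θ (sw s₁) (sw s₂)) : θ (sw M₁) (sw M₂) := by
  have c₁ := J_rightprobe s₁ j
  have c₂ := J_rightprobe s₂ j
  rw [h₁] at c₁
  rw [h₂] at c₂
  exact θ.trans (θ.symm (hJ c₁)) (θ.trans (θ.mul hθ (θ.refl _)) (hJ c₂))

lemma theta_leftprobe {s₁ s₂ M₁ M₂ : MState} {j : ℕ}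
    (h₁ : probeL j s₁ = M₁) (h₂ : probeL j s₂ = M₂)
    (hθ : θ (sw s₁) (sw s₂)) : θ (sw M₁) (sw M₂) := by
  have c₁ := J_leftprobe j s₁
  have c₂ := J_leftprobe j s₂
  rw [h₁] at c₁
  rw [h₂] at c₂
  exact θ.trans (θ.symm (hJ c₁)) (θ.trans (θ.mul (θ.refl _) hθ) (hJ c₂))


/-- Active phase-3 case: both γ-parts empty, `δ`-heads `b₁ < b₂`. -/
lemma act3 {N : ℕ} (IH : IHtype θ N) {B₁ r₂ : List ℕ} {b₂ : ℕ}
    (hm : 2 * (0 + 0) + (B₁.length + (b₂ :: r₂).length) ≤ N + 1)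
    (h12 : Dec B₁) (h22 : Dec (b₂ :: r₂))
    (hlt : ∀ x ∈ B₁, x < b₂)
    (hθ : θ (sw (([] : List ℕ), B₁)) (sw (([] : List ℕ), b₂ :: r₂))) : Collapse θ := by
  -- probe A: γ_{b₂+1}
  have hside2A : stepM (([] : List ℕ), b₂ :: r₂) (capL (b₂ + 1)) = ([], r₂) :=
    stepM_cancel_head r₂ (by omega) (by omega)
  have hltA : ∀ x ∈ B₁, x < b₂ + 1 := fun x hx => by have := hlt x hx; omega
  rcases pushg_low h12 hltA with ⟨P, e, R, hsplit, heq, hres⟩ | ⟨j₀, heq, hres⟩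
  · -- cancel on side 1
    have hside1A : stepM (([] : List ℕ), B₁) (capL (b₂ + 1)) = ([], P ++ R) :=
      stepM_cap_none hres
    have hθA : θ (sw (([] : List ℕ), P ++ R)) (sw (([] : List ℕ), r₂)) :=
      theta_rightprobe hJ hside1A hside2A hθ
    by_cases hmerge : P ++ R = r₂
    · -- merged: use probe B: γ_{b₂}
      have hside2B : stepM (([] : List ℕ), b₂ :: r₂) (capL b₂) = ([], r₂) :=
        stepM_cancel_head r₂ (by omega) (by omega)
      rcases pushg_low h12 hlt with ⟨P', e', R', hsplit', heq', hres'⟩ | ⟨j₀, heq', hres'⟩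
      · have hside1B : stepM (([] : List ℕ), B₁) (capL b₂) = ([], P' ++ R') :=
          stepM_cap_none hres'
        have hθB : θ (sw (([] : List ℕ), P' ++ R')) (sw (([] : List ℕ), r₂)) :=
          theta_rightprobe hJ hside1B hside2B hθ
        have hne' : P' ++ R' ≠ r₂ := by
          intro hPR
          have hsum := e_of_split hsplit
          have hsum' := e_of_split hsplit'
          rw [hPR] at hsum'
          rw [hmerge] at hsum
          have hee : e = e' := by omega
          have hl := len_of_split hsplit
          have hl' := len_of_split hsplit'
          have : P.length = P'.length := by
            have h1 : (P ++ R).length = (P' ++ R').length := by rw [hmerge, hPR]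
            simp at h1
            omega
          omega
        refine IH ([], P' ++ R') ([], r₂) ?_ (by simp) (dec_of_split h12 hsplit') (by simp)
          (List.pairwise_cons.1 h22).2 (by simp [hne']) hθB
        have := len_of_split hsplit'
        simp at hm ⊢
        omega
      · -- survive on probe B: terminal mixed
        have hside1B : stepM (([] : List ℕ), B₁) (capL b₂) = ([j₀], B₁) :=
          stepM_cap_some hres'
        have hθB : θ (sw ([j₀], B₁)) (sw (([] : List ℕ), r₂)) :=
          theta_rightprobe hJ hside1B hside2B hθ
        exact terminal_mixed hJ (by simp) hθB
    · -- not merged: recurse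
      refine IH ([], P ++ R) ([], r₂) ?_ (by simp) (dec_of_split h12 hsplit) (by simp)
        (List.pairwise_cons.1 h22).2 (by simp [hmerge]) hθA
      have := len_of_split hsplit
      simp at hm ⊢
      omega
  · -- survive on probe A: terminal mixed
    have hside1A : stepM (([] : List ℕ), B₁) (capL (b₂ + 1)) = ([j₀], B₁) :=
      stepM_cap_some hres
    have hθA : θ (sw ([j₀], B₁)) (sw (([] : List ℕ), r₂)) :=
      theta_rightprobe hJ hside1A hside2A hθ
    exact terminal_mixed hJ (by simp) hθA

/-- Active mixed case: side 1 has γ-head `a₁` and all γ-entries of side 2 are `< a₁`. -/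
lemma act2 {N : ℕ} (IH : IHtype θ N) {A₁' B₁ A₂ B₂ : List ℕ} {a₁ : ℕ}
    (hm : 2 * ((a₁ :: A₁').length + A₂.length) + (B₁.length + B₂.length) ≤ N + 1)
    (h11 : Dec (a₁ :: A₁')) (h12 : Dec B₁) (h21 : Dec A₂) (h22 : Dec B₂)
    (hlt : ∀ x ∈ A₂, x < a₁)
    (hθ : θ (sw (a₁ :: A₁', B₁)) (sw (A₂, B₂))) : Collapse θ := by
  have hside1A : probeL (a₁ + 1) (a₁ :: A₁', B₁) = (A₁', B₁) :=
    probeL_head (Or.inr rfl) h11 h12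
  have hside1B : probeL a₁ (a₁ :: A₁', B₁) = (A₁', B₁) :=
    probeL_head (Or.inl rfl) h11 h12
  have hltA : ∀ x ∈ A₂, x < a₁ + 1 := fun x hx => by have := hlt x hx; omega
  have h11' : Dec A₁' := (List.pairwise_cons.1 h11).2
  rcases probeL_scan h21 h22 hltA with ⟨P, e, R, hsplit, heq, hres⟩ | ⟨j₀, heq, hres⟩
  · -- probe A cancels on side 2
    have hθA : θ (sw (A₁', B₁)) (sw (P ++ R, B₂)) :=
      theta_leftprobe hJ hside1A hres hθ
    by_cases hmerge : (P ++ R, B₂) = ((A₁' : List ℕ), B₁)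
    · -- merged; probe B
      rcases probeL_scan h21 h22 hlt with ⟨P', e', R', hsplit', heq', hres'⟩ | ⟨j₀, heq', hres'⟩
      · have hθB : θ (sw (A₁', B₁)) (sw (P' ++ R', B₂)) :=
          theta_leftprobe hJ hside1B hres' hθ
        have hne' : (P' ++ R', B₂) ≠ ((A₁' : List ℕ), B₁) := by
          intro hPR
          have hB : B₂ = B₁ := (Prod.mk.injEq _ _ _ _ ▸ hPR).2
          have hPR1 : P' ++ R' = A₁' := (Prod.mk.injEq _ _ _ _ ▸ hPR).1
          have hPR2 : P ++ R = A₁' := (Prod.mk.injEq _ _ _ _ ▸ hmerge).1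
          have hsum := e_of_split hsplit
          have hsum' := e_of_split hsplit'
          rw [hPR1] at hsum'
          rw [hPR2] at hsum
          have hee : e = e' := by omega
          have : P.length = P'.length := by
            have h1 := len_of_split hsplit
            have h2 := len_of_split hsplit'
            have h3 : (P ++ R).length = (P' ++ R').length := by rw [hPR1, hPR2]
            simp at h3
            omega
          omega
        refine IH (A₁', B₁) (P' ++ R', B₂) ?_ h11' h12 (dec_of_split h21 hsplit') h22
          (Ne.symm hne') hθB
        have := len_of_split hsplit'
        simp at hm ⊢
        omega
      · -- probe B survives on side 2
        have hθB : θ (sw (A₁', B₁)) (sw (A₂, BinsF [j₀] B₂)) :=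
          theta_leftprobe hJ hside1B hres' hθ
        have hlen : A₁'.length + 1 = A₂.length := by
          have hPR2 : P ++ R = A₁' := (Prod.mk.injEq _ _ _ _ ▸ hmerge).1
          have h1 := len_of_split hsplit
          have h2 : (P ++ R).length = A₁'.length := by rw [hPR2]
          simp at h2
          omega
        have hne' : ((A₁' : List ℕ), B₁) ≠ (A₂, BinsF [j₀] B₂) := by
          intro hPR
          have hA : A₁' = A₂ := (Prod.mk.injEq _ _ _ _ ▸ hPR).1
          rw [hA] at hlen
          omega
        refine IH (A₁', B₁) (A₂, BinsF [j₀] B₂) ?_ h11' h12 h21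
          (BinsF_sorted _ (by simp)) hne' hθB
        have hbl := BinsF_length [j₀] B₂
        simp at hm hbl ⊢
        omega
    · -- not merged
      refine IH (A₁', B₁) (P ++ R, B₂) ?_ h11' h12 (dec_of_split h21 hsplit) h22
        (Ne.symm (by simpa using hmerge)) hθA
      have := len_of_split hsplit
      simp at hm ⊢
      omega
  · -- probe A survives on side 2
    have hθA : θ (sw (A₁', B₁)) (sw (A₂, BinsF [j₀] B₂)) :=
      theta_leftprobe hJ hside1A hres hθ
    by_cases hmerge : ((A₁' : List ℕ), B₁) = (A₂, BinsF [j₀] B₂)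
    · -- merged; probe B
      rcases probeL_scan h21 h22 hlt with ⟨P', e', R', hsplit', heq', hres'⟩ | ⟨j₀', heq', hres'⟩
      · have hθB : θ (sw (A₁', B₁)) (sw (P' ++ R', B₂)) :=
          theta_leftprobe hJ hside1B hres' hθ
        have hA : A₁' = A₂ := (Prod.mk.injEq _ _ _ _ ▸ hmerge).1
        have hne' : ((A₁' : List ℕ), B₁) ≠ (P' ++ R', B₂) := by
          intro hPR
          have h1 : A₁' = P' ++ R' := (Prod.mk.injEq _ _ _ _ ▸ hPR).1
          have h2 := len_of_split hsplit'
          rw [hA] at h1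
          have : (P' ++ R').length = A₂.length := by rw [← h1]
          simp at this
          omega
        refine IH (A₁', B₁) (P' ++ R', B₂) ?_ h11' h12 (dec_of_split h21 hsplit') h22
          hne' hθB
        have := len_of_split hsplit'
        simp at hm ⊢
        omega
      · have hθB : θ (sw (A₁', B₁)) (sw (A₂, BinsF [j₀'] B₂)) :=
          theta_leftprobe hJ hside1B hres' hθ
        have hne' : ((A₁' : List ℕ), B₁) ≠ (A₂, BinsF [j₀'] B₂) := by
          intro hPR
          have hB1 : B₁ = BinsF [j₀] B₂ := (Prod.mk.injEq _ _ _ _ ▸ hmerge).2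
          have hB2 : B₁ = BinsF [j₀'] B₂ := (Prod.mk.injEq _ _ _ _ ▸ hPR).2
          have : j₀ = j₀' := BinsF_inj B₂ (by rw [← hB1, ← hB2])
          omega
        refine IH (A₁', B₁) (A₂, BinsF [j₀'] B₂) ?_ h11' h12 h21
          (BinsF_sorted _ (by simp)) hne' hθB
        have hbl := BinsF_length [j₀'] B₂
        simp at hm hbl ⊢
        omega
    · refine IH (A₁', B₁) (A₂, BinsF [j₀] B₂) ?_ h11' h12 h21
        (BinsF_sorted _ (by simp)) hmerge hθA
      have hbl := BinsF_length [j₀] B₂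
      simp at hm hbl ⊢
      omega

/-- The main extraction: distinct sorted states that are `θ`-related force collapse. -/
theorem EXT : ∀ (N : ℕ), IHtype θ N := by
  intro N
  induction N with
  | zero =>
      intro s₁ s₂ hm _ _ _ _ hne _
      exfalso
      obtain ⟨A₁, B₁⟩ := s₁
      obtain ⟨A₂, B₂⟩ := s₂
      simp at hm
      obtain ⟨⟨l1, l2⟩, l3, l4⟩ := hm
      apply hne
      rw [l1, l2, l3, l4]
  | succ N IH =>
      intro s₁ s₂ hm h11 h12 h21 h22 hne hθ
      obtain ⟨A₁, B₁⟩ := s₁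
      obtain ⟨A₂, B₂⟩ := s₂
      match hA1 : A₁, hA2 : A₂ with
      | [], [] =>
          -- phase 3
          match hB1 : B₁, hB2 : B₂ with
          | [], [] => exact absurd rfl hne
          | [], b₂ :: r₂ =>
              refine collapse_of_one hJ (s := ([], b₂ :: r₂)) (by simp) ?_
              rw [← sw_nil]
              exact θ.symm hθ
          | b₁ :: r₁, [] =>
              refine collapse_of_one hJ (s := ([], b₁ :: r₁)) (by simp) ?_
              rw [← sw_nil]
              exact hθ
          | b₁ :: r₁, b₂ :: r₂ =>
              rcases Nat.lt_trichotomy b₁ b₂ with hlt | hEq | hlt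
              · exact act3 hJ IH hm h12 h22
                  (fun x hx => lt_of_le_of_lt (by
                    rcases List.mem_cons.1 hx with rfl | hx
                    · exact le_rfl
                    · exact le_of_lt ((List.pairwise_cons.1 h12).1 x hx)) hlt) hθ
              · subst hEq
                -- peel equal heads
                have hs1 : stepM (([] : List ℕ), b₁ :: r₁) (capL (b₁ + 1)) = ([], r₁) :=
                  stepM_cancel_head r₁ (by omega) (by omega)
                have hs2 : stepM (([] : List ℕ), b₁ :: r₂) (capL (b₁ + 1)) = ([], r₂) :=
                  stepM_cancel_head r₂ (by omega) (by omega)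
                have hθ' : θ (sw (([] : List ℕ), r₁)) (sw (([] : List ℕ), r₂)) :=
                  theta_rightprobe hJ hs1 hs2 hθ
                refine IH ([], r₁) ([], r₂) ?_ (by simp) (List.pairwise_cons.1 h12).2
                  (by simp) (List.pairwise_cons.1 h22).2 ?_ hθ'
                · simp at hm ⊢
                  omega
                · intro hcontra
                  apply hne
                  simp at hcontra ⊢
                  rw [hcontra]
              · refine act3 hJ IH ?_ h22 h12
                  (fun x hx => lt_of_le_of_lt (by
                    rcases List.mem_cons.1 hx with rfl | hx
                    · exact le_rfl
                    · exact le_of_lt ((List.pairwise_cons.1 h22).1 x hx)) hlt) (θ.symm hθ)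
                simp at hm ⊢
                omega
      | [], a₂ :: A₂' =>
          refine act2 hJ IH ?_ h21 h22 h11 h12 (by simp) (θ.symm hθ)
          simp at hm ⊢
          omega
      | a₁ :: A₁', [] =>
          exact act2 hJ IH hm h11 h12 h21 h22 (by simp) hθ
      | a₁ :: A₁', a₂ :: A₂' =>
          rcases Nat.lt_trichotomy a₁ a₂ with hlt | hEq | hlt
          · refine act2 hJ IH ?_ h21 h22 h11 h12
              (fun x hx => lt_of_le_of_lt (by
                rcases List.mem_cons.1 hx with rfl | hx
                · exact le_rfl
                · exact le_of_lt ((List.pairwise_cons.1 h11).1 x hx)) hlt) (θ.symm hθ)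
            simp at hm ⊢
            omega
          · subst hEq
            have hs1 : probeL (a₁ + 1) (a₁ :: A₁', B₁) = (A₁', B₁) :=
              probeL_head (Or.inr rfl) h11 h12
            have hs2 : probeL (a₁ + 1) (a₁ :: A₂', B₂) = (A₂', B₂) :=
              probeL_head (Or.inr rfl) h21 h22
            have hθ' : θ (sw (A₁', B₁)) (sw (A₂', B₂)) :=
              theta_leftprobe hJ hs1 hs2 hθ
            refine IH (A₁', B₁) (A₂', B₂) ?_ (List.pairwise_cons.1 h11).2 h12
              (List.pairwise_cons.1 h21).2 h22 ?_ hθ'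
            · simp at hm ⊢
              omega
            · intro hcontra
              apply hne
              simp at hcontra ⊢
              exact hcontra
          · exact act2 hJ IH hm h11 h12 h21 h22
              (fun x hx => lt_of_le_of_lt (by
                rcases List.mem_cons.1 hx with rfl | hx
                · exact le_rfl
                · exact le_of_lt ((List.pairwise_cons.1 h21).1 x hx)) hlt) hθ

end EXT

end JMax
namespace JMax

section Propg

variable {θ : Con LWord} (hJ : ∀ {a b : LWord}, JCon a b → θ a b)

local notation "X" => θ.Quotient

def dX (θ : Con LWord) (n : ℕ) : θ.Quotient := ((wd n : LWord) : θ.Quotient)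
def gX (θ : Con LWord) (n : ℕ) : θ.Quotient := ((wg n : LWord) : θ.Quotient)

include hJ

lemma hdg0 (n : ℕ) : dX θ n * gX θ n = 1 := by
  rw [dX, gX, ← Con.coe_mul, ← Con.coe_one]
  exact (Con.eq θ).2 (hJ (J_cancel₀ n))

lemma hdg1 (n : ℕ) : dX θ n * gX θ (n + 1) = 1 := by
  rw [dX, gX, ← Con.coe_mul, ← Con.coe_one]
  exact (Con.eq θ).2 (hJ (J_cancel₁ n))

lemma hdg2 (n : ℕ) : dX θ (n + 1) * gX θ n = 1 := by
  rw [dX, gX, ← Con.coe_mul, ← Con.coe_one]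
  exact (Con.eq θ).2 (hJ (J_cancel₂ n))

/-- `K n` asserts that `γ_n δ_n = 1` holds in the quotient. -/
def Kp (θ : Con LWord) (n : ℕ) : Prop := gX θ n * dX θ n = 1

lemma K_up {n : ℕ} (hK : Kp θ n) :
    Kp θ (n + 1) ∧ dX θ (n + 1) = dX θ n ∧ gX θ (n + 1) = gX θ n := by
  have hg : gX θ (n + 1) = gX θ n := by
    calc gX θ (n + 1) = (gX θ n * dX θ n) * gX θ (n + 1) := by rw [hK, one_mul]
      _ = gX θ n * (dX θ n * gX θ (n + 1)) := by rw [mul_assoc]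
      _ = gX θ n := by rw [hdg1 hJ n, mul_one]
  have hd : dX θ (n + 1) = dX θ n := by
    calc dX θ (n + 1) = dX θ (n + 1) * (gX θ n * dX θ n) := by rw [hK, mul_one]
      _ = (dX θ (n + 1) * gX θ n) * dX θ n := by rw [mul_assoc]
      _ = dX θ n := by rw [hdg2 hJ n, one_mul]
  exact ⟨by rw [Kp, hg, hd]; exact hK, hd, hg⟩

lemma K_down {n : ℕ} (hK : Kp θ (n + 1)) :
    Kp θ n ∧ dX θ n = dX θ (n + 1) ∧ gX θ n = gX θ (n + 1) := by
  have hg : gX θ n = gX θ (n + 1) := by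
    calc gX θ n = (gX θ (n + 1) * dX θ (n + 1)) * gX θ n := by rw [hK, one_mul]
      _ = gX θ (n + 1) * (dX θ (n + 1) * gX θ n) := by rw [mul_assoc]
      _ = gX θ (n + 1) := by rw [hdg2 hJ n, mul_one]
  have hd : dX θ n = dX θ (n + 1) := by
    calc dX θ n = dX θ n * (gX θ (n + 1) * dX θ (n + 1)) := by rw [hK, mul_one]
      _ = (dX θ n * gX θ (n + 1)) * dX θ (n + 1) := by rw [mul_assoc]
      _ = dX θ (n + 1) := by rw [hdg1 hJ n, one_mul]
  exact ⟨by rw [Kp, hg, hd]; exact hK, hd, hg⟩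

lemma K_all (hc : Collapse θ) : ∀ n : ℕ, Kp θ n := by
  obtain ⟨a, b, hab⟩ := hc
  have hXab : gX θ a * dX θ b = 1 := by
    rw [gX, dX, ← Con.coe_mul, ← Con.coe_one]
    exact (Con.eq θ).2 hab
  have hKb : Kp θ b := by
    have hga : gX θ a = gX θ b := by
      calc gX θ a = gX θ a * (dX θ b * gX θ b) := by rw [hdg0 hJ b, mul_one]
        _ = (gX θ a * dX θ b) * gX θ b := by rw [mul_assoc]
        _ = gX θ b := by rw [hXab, one_mul]
    rw [Kp, ← hga]
    exact hXab
  have hup : ∀ m, Kp θ (b + m) := by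
    intro m
    induction m with
    | zero => exact hKb
    | succ m ih => exact (K_up hJ ih).1
  have hdown : ∀ m, Kp θ (b - m) := by
    intro m
    induction m with
    | zero => exact hKb
    | succ m ih =>
        by_cases h : m < b
        · have : b - m = (b - (m + 1)) + 1 := by omega
          rw [this] at ih
          exact (K_down hJ ih).1
        · have : b - (m + 1) = b - m := by omega
          rw [this]
          exact ih
  intro n
  rcases le_or_gt n b with h | h
  · have : n = b - (b - n) := by omega
    rw [this]
    exact hdown _
  · have : n = b + (n - b) := by omega
    rw [this]
    exact hup _

lemma collapse_eq (hc : Collapse θ) :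
    ∀ n : ℕ, dX θ n = dX θ 0 ∧ gX θ n = gX θ 0 := by
  intro n
  induction n with
  | zero => exact ⟨rfl, rfl⟩
  | succ n ih =>
      have h := K_up hJ (K_all hJ hc n)
      exact ⟨h.2.1.trans ih.1, h.2.2.trans ih.2⟩

/-- Under collapse, `δ_1` becomes a unit in the quotient, with inverse `γ_1`. -/
def Ux (hc : Collapse θ) : (θ.Quotient)ˣ where
  val := dX θ 0
  inv := gX θ 0
  val_inv := hdg0 hJ 0
  inv_val := K_all hJ hc 0

end Propg

end JMax
namespace JMax

/-! ### The weight `cz` -/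

def cz (w : LWord) : ℤ := (cups w : ℤ) - (caps w : ℤ)

lemma cups_mul (a b : LWord) : cups (a * b) = cups a + cups b := by
  simp [cups, FreeMonoid.toList_mul, List.countP_append]

lemma caps_mul (a b : LWord) : caps (a * b) = caps a + caps b := by
  simp [caps, FreeMonoid.toList_mul, List.countP_append]

lemma cz_mul (a b : LWord) : cz (a * b) = cz a + cz b := by
  simp [cz, cups_mul, caps_mul]
  ring

lemma cz_one : cz 1 = 0 := by
  simp [cz, cups, caps]

lemma cups_cupW (k : ℕ+) : cups (cupW k) = 1 := rfl
lemma caps_cupW (k : ℕ+) : caps (cupW k) = 0 := rfl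
lemma cups_capW (k : ℕ+) : cups (capW k) = 0 := rfl
lemma caps_capW (k : ℕ+) : caps (capW k) = 1 := rfl

lemma cz_cupW (k : ℕ+) : cz (cupW k) = 1 := rfl
lemma cz_capW (k : ℕ+) : cz (capW k) = -1 := rfl

lemma cz_pow (x : LWord) (j : ℕ) : cz (x ^ j) = j * cz x := by
  induction j with
  | zero => simp [cz_one]
  | succ j ih =>
      rw [pow_succ, cz_mul, ih]
      push_cast
      ring

lemma JRel_cz {a b : LWord} (h : JRel a b) : cz a = cz b := by
  rcases h with h | ⟨k, rfl, rfl⟩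
  · cases h <;> simp [cz_mul, cz_cupW, cz_capW, cz_one]
  · simp [cz_mul, cz_cupW, cz_capW, cz_one]

/-! ### Words and powers of the unit -/

section Pows

variable {θ : Con LWord} (hJ : ∀ {a b : LWord}, JCon a b → θ a b) (hc : Collapse θ)

include hJ hc

lemma coe_cupW (k : ℕ+) : ((cupW k : LWord) : θ.Quotient) = dX θ 0 := by
  have : (cupW k : LWord) = wd k.natPred := by rw [wd, pn_natPred]
  rw [this]
  exact (collapse_eq hJ hc k.natPred).1

lemma coe_capW (k : ℕ+) : ((capW k : LWord) : θ.Quotient) = gX θ 0 := by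
  have : (capW k : LWord) = wg k.natPred := by rw [wg, pn_natPred]
  rw [this]
  exact (collapse_eq hJ hc k.natPred).2

lemma mk_upow (w : LWord) :
    ((w : LWord) : θ.Quotient) = ((Ux hJ hc ^ cz w : (θ.Quotient)ˣ) : θ.Quotient) := by
  have main : ∀ l : List LGen,
      ((FreeMonoid.ofList l : LWord) : θ.Quotient)
        = ((Ux hJ hc ^ cz (FreeMonoid.ofList l) : (θ.Quotient)ˣ) : θ.Quotient) := by
    intro l
    induction l with
    | nil =>
        rw [show (FreeMonoid.ofList ([] : List LGen) : LWord) = 1 from rfl]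
        rw [cz_one, zpow_zero, Units.val_one, Con.coe_one]
    | cons g l ih =>
        have e : (FreeMonoid.ofList (g :: l) : LWord) = FreeMonoid.of g * FreeMonoid.ofList l :=
          rfl
        rw [e, Con.coe_mul, cz_mul]
        cases g with
        | cup k =>
            have e2 : (FreeMonoid.of (LGen.cup k) : LWord) = cupW k := rfl
            rw [e2, coe_cupW hJ hc, ih, cz_cupW]
            have : dX θ 0 = ((Ux hJ hc ^ (1 : ℤ) : (θ.Quotient)ˣ) : θ.Quotient) := by
              rw [zpow_one]
              rfl
            rw [this, ← Units.val_mul, ← zpow_add]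
        | cap k =>
            have e2 : (FreeMonoid.of (LGen.cap k) : LWord) = capW k := rfl
            rw [e2, coe_capW hJ hc, ih, cz_capW]
            have : gX θ 0 = ((Ux hJ hc ^ (-1 : ℤ) : (θ.Quotient)ˣ) : θ.Quotient) := by
              rw [zpow_neg_one]
              rfl
            rw [this, ← Units.val_mul, ← zpow_add]
  have := main (FreeMonoid.toList w)
  rwa [FreeMonoid.ofList_toList] at this

lemma upow_eq_one {t u : LWord} (hrel : θ t u) :
    Ux hJ hc ^ (cz t - cz u) = 1 := by
  have h1 : ((t : LWord) : θ.Quotient) = ((u : LWord) : θ.Quotient) := (Con.eq θ).2 hrel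
  rw [mk_upow hJ hc t, mk_upow hJ hc u] at h1
  have h2 : Ux hJ hc ^ cz t = Ux hJ hc ^ cz u := Units.ext h1
  rw [zpow_sub, h2]
  exact mul_inv_cancel _

lemma upow_n_eq_one {t u : LWord} (hrel : θ t u) :
    Ux hJ hc ^ ((balance t u : ℤ)) = 1 := by
  have h := upow_eq_one hJ hc hrel
  have hbal : balance t u = (cz t - cz u).natAbs := rfl
  have hb : (balance t u : ℤ) = cz t - cz u ∨ (balance t u : ℤ) = -(cz t - cz u) := by
    rcases Int.natAbs_eq (cz t - cz u) with h' | h'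
    · left
      rw [hbal, ← h']
    · right
      rw [hbal]
      omega
  rcases hb with hb | hb
  · rw [hb, h]
  · rw [hb, zpow_neg, h, inv_one]

end Pows

end JMax
namespace JMax

def fgen (n : ℕ) : LGen → Multiplicative (ZMod n)
  | .cup _ => Multiplicative.ofAdd (1 : ZMod n)
  | .cap _ => Multiplicative.ofAdd (-1 : ZMod n)

def fhom (n : ℕ) : LWord →* Multiplicative (ZMod n) := FreeMonoid.lift (fgen n)

lemma fhom_eq (n : ℕ) (w : LWord) :
    fhom n w = Multiplicative.ofAdd ((cz w : ZMod n)) := by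
  have main : ∀ l : List LGen, fhom n (FreeMonoid.ofList l)
      = Multiplicative.ofAdd ((cz (FreeMonoid.ofList l) : ZMod n)) := by
    intro l
    induction l with
    | nil =>
        rw [show (FreeMonoid.ofList ([] : List LGen) : LWord) = 1 from rfl]
        rw [map_one, cz_one]
        simp
    | cons g l ih =>
        rw [show (FreeMonoid.ofList (g :: l) : LWord) = FreeMonoid.of g * FreeMonoid.ofList l
          from rfl]
        rw [map_mul, cz_mul, ih]
        rw [show (fhom n) (FreeMonoid.of g) = fgen n g from FreeMonoid.lift_eval_of _ g]
        cases g with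
        | cup k =>
            rw [show fgen n (LGen.cup k) = Multiplicative.ofAdd (1 : ZMod n) from rfl]
            rw [show cz (FreeMonoid.of (LGen.cup k)) = 1 from rfl]
            rw [← ofAdd_add]
            congr 1
            push_cast
            ring
        | cap k =>
            rw [show fgen n (LGen.cap k) = Multiplicative.ofAdd (-1 : ZMod n) from rfl]
            rw [show cz (FreeMonoid.of (LGen.cap k)) = -1 from rfl]
            rw [← ofAdd_add]
            congr 1
            push_cast
            ring
  have := main (FreeMonoid.toList w)
  rwa [FreeMonoid.ofList_toList] at this

end JMax

open JMax in
theorem maximality_of_Jomega_aux (t u : LWord) (hne : ¬ JCon t u) :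
    Nonempty ((XCon t u).Quotient ≃* Multiplicative (ZMod (balance t u))) := by
  have hJX : ∀ {a b : LWord}, JCon a b → XCon t u a b := by
    intro a b h
    have hle : JCon ≤ XCon t u := Con.conGen_mono (fun x y hxy => Or.inl hxy)
    exact Con.le_def.1 hle h
  have htu : XCon t u t u := ConGen.Rel.of _ _ (Or.inr ⟨rfl, rfl⟩)
  have hbal : balance t u = (cz t - cz u).natAbs := rfl
  -- collapse
  have hcol : Collapse (XCon t u) := by
    by_cases hss : nfM t = nfM u
    · exfalso
      apply hne
      have h1 := J_nf t
      have h2 := J_nf u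
      rw [hss] at h1
      exact Con.trans _ h1 (Con.symm _ h2)
    · have hθ : XCon t u (sw (nfM t)) (sw (nfM u)) :=
        Con.trans _ (Con.symm _ (hJX (J_nf t))) (Con.trans _ htu (hJX (J_nf u)))
      exact EXT hJX _ (nfM t) (nfM u) le_rfl (nfM_sorted t).1 (nfM_sorted t).2
        (nfM_sorted u).1 (nfM_sorted u).2 hss hθ
  have hUn := upow_n_eq_one hJX hcol htu
  -- kernel equality
  have hker : XCon t u = Con.ker (fhom (balance t u)) := by
    apply le_antisymm
    · show conGen _ ≤ _
      apply Con.conGen_le.2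
      intro x y hxy
      rw [Con.ker_rel]
      rcases hxy with hxy | ⟨rfl, rfl⟩
      · rw [fhom_eq, fhom_eq, JRel_cz hxy]
      · rw [fhom_eq, fhom_eq]
        congr 1
        have hdvd : ((balance x y : ℕ) : ℤ) ∣ (cz x - cz y) := by
          rw [hbal]
          exact Int.natAbs_dvd.2 dvd_rfl
        have h0 : ((cz x - cz y : ℤ) : ZMod (balance x y)) = 0 :=
          (ZMod.intCast_zmod_eq_zero_iff_dvd _ _).2 hdvd
        push_cast at h0
        linear_combination h0
    · rw [Con.le_def]
      intro x y hxy
      have hker' : fhom (balance t u) x = fhom (balance t u) y := (Con.ker_rel _).1 hxy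
      rw [fhom_eq, fhom_eq] at hker'
      have hcast : ((cz x : ℤ) : ZMod (balance t u)) = ((cz y : ℤ) : ZMod (balance t u)) :=
        Multiplicative.ofAdd.injective hker'
      have hmod : ((balance t u : ℕ) : ℤ) ∣ (cz y - cz x) :=
        Int.ModEq.dvd ((ZMod.intCast_eq_intCast_iff _ _ _).1 hcast)
      obtain ⟨k, hk⟩ := hmod
      apply (Con.eq _).1
      rw [mk_upow hJX hcol x, mk_upow hJX hcol y]
      congr 1
      have : cz y = cz x + ((balance t u : ℕ) : ℤ) * k := by omega
      rw [this, zpow_add, zpow_mul, hUn, one_zpow, mul_one]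
  -- surjectivity
  have hsurj : Function.Surjective (fhom (balance t u)) := by
    intro z
    obtain ⟨m, hm⟩ := ZMod.intCast_surjective (n := balance t u) (Multiplicative.toAdd z)
    rcases le_or_gt 0 m with hm0 | hm0
    · refine ⟨(cupW (pn 0)) ^ m.toNat, ?_⟩
      rw [fhom_eq]
      have hczw : cz ((cupW (pn 0)) ^ m.toNat) = m := by
        rw [cz_pow, cz_cupW]
        omega
      rw [hczw, hm]
      simp
    · refine ⟨(capW (pn 0)) ^ (-m).toNat, ?_⟩
      rw [fhom_eq]
      have hczw : cz ((capW (pn 0)) ^ (-m).toNat) = m := by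
        rw [cz_pow, cz_capW]
        omega
      rw [hczw, hm]
      simp
  exact ⟨(Con.congr (MulEquiv.refl _) (by rw [hker]; exact Con.ext fun _ _ => Iff.rfl)).trans (Con.quotientKerEquivOfSurjective (fhom (balance t u)) hsurj)⟩

/-- Maximality of `J_ω`: if the words `t` and `u` have distinct images in `J_ω`, then the
monoid `X` presented by the generators and defining relations of `J_ω` together with the
additional relation `t = u` is isomorphic, as a monoid, to the additive monoid of integers
modulo `β(t, u)` — i.e. to `(ℤ, +)` when `β(t, u) = 0` and to `ℤ/nℤ` when `β(t, u) = n > 0`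
(recall `ZMod 0 = ℤ`). -/
theorem maximality_of_Jomega (t u : LWord) (hne : ¬ JCon t u) :
    Nonempty ((XCon t u).Quotient ≃* Multiplicative (ZMod (balance t u))) := by
  exact maximality_of_Jomega_aux t u hne
end

section
/- For all p ≥ 1, n ≥ 1 and 1 ≤ i, j ≤ n−1, the matrices h_k^n satisfy the Temperley–Lieb relations: h_i^n · h_j^n = h_j^n · h_i^n whenever |i − j| ≥ 2; h_i^n · h_{i+1}^n · h_i^n = h_i^n and h_{i+1}^n · h_i^n · h_{i+1}^n = h_{i+1}^n; and h_i^n · h_i^n = p · h_i^n. -/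
open Matrix

/-- The Kronecker product of an `a × b` matrix and a `c × d` matrix, as an
`(a·c) × (b·d)` matrix: the entry at row `r = r₁·c + r₂` and column `s = s₁·d + s₂`
(with `r₂ < c`, `s₂ < d`) is `A r₁ s₁ * B r₂ s₂`. -/
def kron {F : Type*} [Mul F] {a b c d : ℕ}
    (A : Matrix (Fin a) (Fin b) F) (B : Matrix (Fin c) (Fin d) F) :
    Matrix (Fin (a * c)) (Fin (b * d)) F :=
  Matrix.of fun r s => A r.divNat s.divNat * B r.modNat s.modNat

/-- The `1 × p²` matrix `E_p`, whose entry in column `(i−1)p + j` (for `1 ≤ i, j ≤ p`)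
is `1` if `i = j` and `0` otherwise. -/
def Ep (F : Type*) [Zero F] [One F] (p : ℕ) : Matrix (Fin 1) (Fin (p * p)) F :=
  Matrix.of fun _ s => if s.divNat = s.modNat then 1 else 0

/-- The `m × p²m` matrix `φ_m = E_p ⊗ 1_m` (the counit of the self-adjunction of the
functor `p ⊗` on matrices). -/
def phiMat (F : Type*) [Semiring F] (p m : ℕ) : Matrix (Fin m) (Fin (p * p * m)) F :=
  Matrix.reindex (finCongr (Nat.one_mul m)) (Equiv.refl _)
    (kron (Ep F p) (1 : Matrix (Fin m) (Fin m) F))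

/-- The `p²m × m` matrix `γ_m = E_p' ⊗ 1_m`, where `E_p'` is the transpose of `E_p`
(the unit of the self-adjunction of the functor `p ⊗` on matrices). -/
def gammaMat (F : Type*) [Semiring F] (p m : ℕ) : Matrix (Fin (p * p * m)) (Fin m) F :=
  Matrix.reindex (Equiv.refl _) (finCongr (Nat.one_mul m))
    (kron (Ep F p)ᵀ (1 : Matrix (Fin m) (Fin m) F))

/-- The `p^n × p^n` matrix `h_k^n = 1_{p^{n−k−1}} ⊗ (E_p' · E_p) ⊗ 1_{p^{k−1}}`
(for `1 ≤ k ≤ n − 1`), reindexed along `p^{n−k−1} · p² · p^{k−1} = p^n`. -/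
def hMat (F : Type*) [Semiring F] (p n k : ℕ) (h1 : 1 ≤ k) (h2 : k < n) :
    Matrix (Fin (p ^ n)) (Fin (p ^ n)) F :=
  Matrix.reindex
    (finCongr (by
      have h : n - k - 1 + 2 + (k - 1) = n := by omega
      calc p ^ (n - k - 1) * (p * p) * p ^ (k - 1)
          = p ^ (n - k - 1) * p ^ 2 * p ^ (k - 1) := by rw [← pow_two]
        _ = p ^ (n - k - 1 + 2 + (k - 1)) := by rw [← pow_add, ← pow_add]
        _ = p ^ n := by rw [h]))
    (finCongr (by
      have h : n - k - 1 + 2 + (k - 1) = n := by omega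
      calc p ^ (n - k - 1) * (p * p) * p ^ (k - 1)
          = p ^ (n - k - 1) * p ^ 2 * p ^ (k - 1) := by rw [← pow_two]
        _ = p ^ (n - k - 1 + 2 + (k - 1)) := by rw [← pow_add, ← pow_add]
        _ = p ^ n := by rw [h]))
    (kron (kron (1 : Matrix (Fin (p ^ (n - k - 1))) (Fin (p ^ (n - k - 1))) F)
        ((Ep F p)ᵀ * Ep F p))
      (1 : Matrix (Fin (p ^ (k - 1))) (Fin (p ^ (k - 1))) F))


namespace TLaux

def dig (p m x : ℕ) : ℕ := x / p ^ m % p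

def setD (p k c x : ℕ) : ℕ := x / p ^ (k + 1) * p ^ (k + 1) + c * p ^ k + x % p ^ k

def Dd (p k r s : ℕ) : Prop :=
  dig p k r = dig p (k - 1) r ∧ dig p k s = dig p (k - 1) s ∧
    ∀ m, m ≠ k - 1 → m ≠ k → dig p m r = dig p m s

variable {p : ℕ}

lemma dig_lt (hp : 1 ≤ p) (m x : ℕ) : dig p m x < p := Nat.mod_lt _ (by omega)

lemma dig_div (m j x : ℕ) : dig p m (x / p ^ j) = dig p (m + j) x := by
  unfold dig
  rw [Nat.div_div_eq_div_mul, ← pow_add, Nat.add_comm j m]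

lemma dig_mod {m j : ℕ} (h : m < j) (x : ℕ) : dig p m (x % p ^ j) = dig p m x := by
  unfold dig
  have h1 : p ^ j = p ^ m * p ^ (j - m) := by rw [← pow_add]; congr 1; omega
  rw [h1, Nat.mod_mul_right_div_self]
  exact Nat.mod_mod_of_dvd _ (dvd_pow_self p (by omega))

lemma dig_eq_zero_of_lt {m x : ℕ} (h : x < p ^ m) : dig p m x = 0 := by
  unfold dig; rw [Nat.div_eq_of_lt h, Nat.zero_mod]

lemma digit_ext (hp : 2 ≤ p) {N x y : ℕ} (hx : x < p ^ N) (hy : y < p ^ N)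
    (h : ∀ m, dig p m x = dig p m y) : x = y := by
  induction N generalizing x y with
  | zero => simp only [pow_zero, Nat.lt_one_iff] at hx hy; omega
  | succ N ih =>
    have h0 : x % p = y % p := by
      have := h 0; unfold dig at this; simpa using this
    have hq : x / p = y / p := by
      refine ih ?_ ?_ ?_
      · exact Nat.div_lt_of_lt_mul (by rw [← pow_succ'] ; exact hx)
      · exact Nat.div_lt_of_lt_mul (by rw [← pow_succ'] ; exact hy)
      · intro m
        have := h (m + 1)
        have e1 : dig p m (x / p) = dig p (m + 1) x := by
          have := dig_div (p := p) m 1 x; simpa using this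
        have e2 : dig p m (y / p) = dig p (m + 1) y := by
          have := dig_div (p := p) m 1 y; simpa using this
        rw [e1, e2, this]
    have hx' := Nat.div_add_mod x p
    have hy' := Nat.div_add_mod y p
    rw [hq, h0] at hx'
    rw [← hx', hy']

lemma div_eq_iff (hp : 2 ≤ p) {N j x y : ℕ} (hx : x < p ^ N) (hy : y < p ^ N) :
    x / p ^ j = y / p ^ j ↔ ∀ m, j ≤ m → dig p m x = dig p m y := by
  constructor
  · intro h m hm
    have := congrArg (dig p (m - j)) h
    rw [dig_div, dig_div] at this
    have e : m - j + j = m := by omega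
    rwa [e] at this
  · intro h
    refine digit_ext hp (lt_of_le_of_lt (Nat.div_le_self _ _) hx)
      (lt_of_le_of_lt (Nat.div_le_self _ _) hy) ?_
    intro m
    rw [dig_div, dig_div]
    exact h _ (by omega)

lemma mod_eq_iff (hp : 2 ≤ p) {j : ℕ} (x y : ℕ) :
    x % p ^ j = y % p ^ j ↔ ∀ m, m < j → dig p m x = dig p m y := by
  constructor
  · intro h m hm
    rw [← dig_mod hm x, ← dig_mod hm y, h]
  · intro h
    have hpos : 0 < p ^ j := pow_pos (by omega) j
    refine digit_ext hp (Nat.mod_lt x hpos) (Nat.mod_lt y hpos) ?_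
    intro m
    by_cases hm : m < j
    · rw [dig_mod hm, dig_mod hm]; exact h m hm
    · rw [dig_eq_zero_of_lt, dig_eq_zero_of_lt]
      · exact lt_of_lt_of_le (Nat.mod_lt y hpos) (Nat.pow_le_pow_right (by omega) (by omega))
      · exact lt_of_lt_of_le (Nat.mod_lt x hpos) (Nat.pow_le_pow_right (by omega) (by omega))

lemma setD_eq (k c x : ℕ) : setD p k c x = p ^ k * (x / p ^ (k + 1) * p + c) + x % p ^ k := by
  unfold setD; ring

lemma rest_lt (hp : 1 ≤ p) {k c : ℕ} (hc : c < p) (x : ℕ) :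
    c * p ^ k + x % p ^ k < p ^ (k + 1) := by
  have h1 : x % p ^ k < p ^ k := Nat.mod_lt _ (pow_pos (by omega) k)
  calc c * p ^ k + x % p ^ k < c * p ^ k + p ^ k := by omega
    _ = (c + 1) * p ^ k := by ring
    _ ≤ p * p ^ k := Nat.mul_le_mul_right _ (by omega)
    _ = p ^ (k + 1) := by rw [pow_succ]; ring

lemma setD_lt (hp : 1 ≤ p) {N k c x : ℕ} (hk : k < N) (hc : c < p) (hx : x < p ^ N) :
    setD p k c x < p ^ N := by
  have h1 := rest_lt hp (k := k) hc x
  have h2 : x / p ^ (k + 1) < p ^ (N - k - 1) := by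
    apply Nat.div_lt_of_lt_mul
    rw [← pow_add]
    have e : k + 1 + (N - k - 1) = N := by omega
    rwa [e]
  calc setD p k c x < x / p ^ (k + 1) * p ^ (k + 1) + p ^ (k + 1) := by
        unfold setD; omega
    _ = (x / p ^ (k + 1) + 1) * p ^ (k + 1) := by ring
    _ ≤ p ^ (N - k - 1) * p ^ (k + 1) := Nat.mul_le_mul_right _ (by omega)
    _ = p ^ N := by rw [← pow_add]; congr 1; omega

lemma setD_div (hp : 1 ≤ p) {k c : ℕ} (hc : c < p) (x : ℕ) :
    setD p k c x / p ^ (k + 1) = x / p ^ (k + 1) := by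
  unfold setD
  rw [add_assoc, mul_comm (x / p ^ (k + 1)) (p ^ (k + 1)), Nat.mul_add_div (pow_pos (by omega) _)]
  rw [Nat.div_eq_of_lt (rest_lt hp hc x)]
  omega

lemma setD_mod (k c x : ℕ) : setD p k c x % p ^ k = x % p ^ k := by
  rw [setD_eq, Nat.mul_add_mod, Nat.mod_mod_of_dvd _ dvd_rfl]

lemma dig_setD_self (hp : 1 ≤ p) {k c : ℕ} (hc : c < p) (x : ℕ) :
    dig p k (setD p k c x) = c := by
  unfold dig
  rw [setD_eq, Nat.mul_add_div (pow_pos (by omega) _),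
    Nat.div_eq_of_lt (Nat.mod_lt _ (pow_pos (by omega) k)), Nat.add_zero,
    Nat.mul_add_mod', Nat.mod_eq_of_lt hc]

lemma dig_setD_of_gt (hp : 1 ≤ p) {k m c : ℕ} (h : k < m) (hc : c < p) (x : ℕ) :
    dig p m (setD p k c x) = dig p m x := by
  have e1 : dig p (m - (k+1)) (setD p k c x / p ^ (k+1)) = dig p m (setD p k c x) := by
    rw [dig_div]; congr 1; omega
  have e2 : dig p (m - (k+1)) (x / p ^ (k+1)) = dig p m x := by
    rw [dig_div]; congr 1; omega
  rw [← e1, setD_div hp hc, e2]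

lemma dig_setD_of_lt {k m c : ℕ} (h : m < k) (x : ℕ) :
    dig p m (setD p k c x) = dig p m x := by
  rw [← dig_mod h, setD_mod, dig_mod h]

lemma prod4 {F : Type*} [Field F] (P1 P2 P3 P4 Q : Prop) [Decidable P1] [Decidable P2]
    [Decidable P3] [Decidable P4] [Decidable Q] (h : P1 ∧ P2 ∧ P3 ∧ P4 ↔ Q) :
    (if P1 then (1:F) else 0) * ((if P2 then (1:F) else 0) * (if P3 then (1:F) else 0))
      * (if P4 then (1:F) else 0) = if Q then 1 else 0 := by
  by_cases hq : Q
  · obtain ⟨a, b, c, d⟩ := h.mpr hq; simp [a, b, c, d, hq]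
  · rw [if_neg hq]
    by_cases a : P1 <;> by_cases b : P2 <;> by_cases c : P3 <;> by_cases d : P4 <;>
      simp [a, b, c, d] <;> exact hq (h.mp ⟨a, b, c, d⟩)

open scoped Classical in
lemma hMat_apply (F : Type*) [Field F] {n k : ℕ} (hp : 2 ≤ p) (h1 : 1 ≤ k) (h2 : k < n)
    (r s : Fin (p ^ n)) :
    hMat F p n k h1 h2 r s = if Dd p k r.val s.val then 1 else 0 := by
  rw [hMat, Matrix.reindex_apply, Matrix.submatrix_apply]
  simp only [kron, Ep, Matrix.of_apply, Matrix.mul_apply, Matrix.one_apply,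
    Matrix.transpose_apply, Fin.sum_univ_one, Fin.ext_iff, Fin.coe_divNat, Fin.coe_modNat,
    finCongr_symm, finCongr_apply, Fin.coe_cast]
  set R := (r : ℕ); set S := (s : ℕ)
  have hR : R < p ^ n := r.isLt
  have hS : S < p ^ n := s.isLt
  apply prod4
  have e1 : p ^ (k - 1) * (p * p) = p ^ (k + 1) := by
    rw [← pow_two, ← pow_add]; congr 1; omega
  have eA1 : ∀ x : ℕ, x / p ^ (k - 1) / (p * p) = x / p ^ (k + 1) := by
    intro x; rw [Nat.div_div_eq_div_mul, e1]
  have eA2 : ∀ x : ℕ, x / p ^ (k - 1) % (p * p) / p = dig p k x := by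
    intro x
    rw [Nat.mod_mul_right_div_self, Nat.div_div_eq_div_mul]
    unfold dig
    congr 2
    rw [← pow_succ]; congr 1; omega
  have eA3 : ∀ x : ℕ, x / p ^ (k - 1) % (p * p) % p = dig p (k - 1) x := by
    intro x
    rw [Nat.mod_mod_of_dvd _ (Dvd.intro p rfl)]
    rfl
  rw [eA1, eA1, eA2, eA3, eA2, eA3]
  constructor
  · rintro ⟨a1, a2, a3, a4⟩
    refine ⟨a2, a3, ?_⟩
    intro m hm1 hm2
    rcases lt_or_ge m (k - 1) with h | h
    · exact (mod_eq_iff hp R S).mp a4 m h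
    · exact (div_eq_iff hp hR hS).mp a1 m (by omega)
  · rintro ⟨a2, a3, a5⟩
    refine ⟨?_, a2, a3, ?_⟩
    · exact (div_eq_iff hp hR hS).mpr (fun m hm => a5 m (by omega) (by omega))
    · exact (mod_eq_iff hp R S).mpr (fun m hm => a5 m (by omega) (by omega))
/-- digits of a double setD at positions k and k-1 -/
lemma dig_setD_pair (hp : 1 ≤ p) {i c : ℕ} (hc : c < p) (R m : ℕ) :
    dig p m (setD p i c (setD p (i - 1) c R)) =
      if m = i ∨ m = i - 1 then c else dig p m R := by
  by_cases h1 : m = i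
  · subst h1; rw [dig_setD_self hp hc]; simp
  by_cases h2 : m = i - 1
  · have hi : 1 ≤ i := by omega
    subst h2
    rw [dig_setD_of_lt (by omega), dig_setD_self hp hc]; simp
  · rw [if_neg (by tauto)]
    rcases Nat.lt_or_ge m i with hm | hm
    · rw [dig_setD_of_lt hm, dig_setD_of_lt (by omega)]
    · rw [dig_setD_of_gt hp (by omega) hc, dig_setD_of_gt hp (by omega) hc]

def Ecomm (p i j r s : ℕ) : Prop :=
  dig p i r = dig p (i-1) r ∧ dig p j r = dig p (j-1) r ∧
  dig p i s = dig p (i-1) s ∧ dig p j s = dig p (j-1) s ∧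
  ∀ m, m ≠ i-1 → m ≠ i → m ≠ j-1 → m ≠ j → dig p m r = dig p m s

lemma cruxA (hp : 2 ≤ p) {n i j : ℕ} (hi1 : 1 ≤ i) (hi2 : i < n) (hj1 : 1 ≤ j)
    (hj2 : j < n) (hd : i + 2 ≤ j ∨ j + 2 ≤ i) {R S T : ℕ}
    (hR : R < p ^ n) (hS : S < p ^ n) (hT : T < p ^ n) :
    (Dd p i R T ∧ Dd p j T S) ↔
      (Ecomm p i j R S ∧ T = setD p i (dig p i S) (setD p (i-1) (dig p i S) R)) := by
  have hp1 : 1 ≤ p := by omega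
  have hcS : dig p i S < p := dig_lt hp1 _ _
  constructor
  · rintro ⟨⟨a1, a2, a3⟩, ⟨b1, b2, b3⟩⟩
    have eiT' : dig p i T = dig p i S := b3 i (by omega) (by omega)
    refine ⟨⟨a1, ?_, ?_, b2, ?_⟩, ?_⟩
    · calc dig p j R = dig p j T := a3 j (by omega) (by omega)
        _ = dig p (j-1) T := b1
        _ = dig p (j-1) R := (a3 (j-1) (by omega) (by omega)).symm
    · calc dig p i S = dig p i T := eiT'.symm
        _ = dig p (i-1) T := a2
        _ = dig p (i-1) S := b3 (i-1) (by omega) (by omega)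
    · intro m h1 h2 h3 h4
      exact (a3 m h1 h2).trans (b3 m h3 h4)
    · refine digit_ext hp hT (setD_lt hp1 hi2 hcS (setD_lt hp1 (by omega) hcS hR)) ?_
      intro m
      rw [dig_setD_pair hp1 hcS]
      by_cases h1 : m = i
      · subst h1; rw [if_pos (Or.inl rfl)]; exact eiT'
      by_cases h2 : m = i - 1
      · subst h2
        rw [if_pos (Or.inr rfl)]
        calc dig p (i-1) T = dig p i T := a2.symm
          _ = dig p i S := eiT'
      · rw [if_neg (by tauto)]
        exact (a3 m h2 h1).symm
  · rintro ⟨⟨e1, e2, e3, e4, e5⟩, rfl⟩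
    have hdig : ∀ m, dig p m (setD p i (dig p i S) (setD p (i-1) (dig p i S) R)) =
        if m = i ∨ m = i - 1 then dig p i S else dig p m R := fun m => dig_setD_pair hp1 hcS R m
    refine ⟨⟨e1, ?_, ?_⟩, ⟨?_, e4, ?_⟩⟩
    · rw [hdig i, hdig (i-1), if_pos (Or.inl rfl), if_pos (Or.inr rfl)]
    · intro m h1 h2
      rw [hdig m, if_neg (by tauto)]
    · rw [hdig j, hdig (j-1), if_neg (by omega), if_neg (by omega)]
      calc dig p j R = dig p (j-1) R := e2
        _ = dig p (j-1) R := rfl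
    · intro m h3 h4
      rw [hdig m]
      by_cases h1 : m = i
      · subst h1; rw [if_pos (Or.inl rfl)]
      by_cases h2 : m = i - 1
      · subst h2; rw [if_pos (Or.inr rfl)]
        exact e3
      · rw [if_neg (by tauto)]
        exact e5 m h2 h1 h3 h4

def Gb (p i r s : ℕ) : Prop :=
  dig p i r = dig p (i-1) r ∧ dig p (i+1) s = dig p i s ∧
  dig p (i-1) s = dig p (i+1) r ∧
  ∀ m, m ≠ i-1 → m ≠ i → m ≠ i+1 → dig p m r = dig p m s

lemma cruxB1 (hp : 2 ≤ p) {n i : ℕ} (hi1 : 1 ≤ i) (hi2 : i + 1 < n) {R S T : ℕ}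
    (hR : R < p ^ n) (hS : S < p ^ n) (hT : T < p ^ n) :
    (Dd p i R T ∧ Dd p (i+1) T S) ↔
      (Gb p i R S ∧ T = setD p i (dig p (i+1) R) (setD p (i-1) (dig p (i+1) R) R)) := by
  have hp1 : 1 ≤ p := by omega
  set c := dig p (i+1) R with hc
  have hcp : c < p := dig_lt hp1 _ _
  simp only [Dd, Gb, Nat.add_sub_cancel]
  constructor
  · rintro ⟨⟨a1, a2, a3⟩, ⟨b1, b2, b3⟩⟩
    have eT1 : dig p (i+1) T = c := (a3 (i+1) (by omega) (by omega)).symm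
    have eTi : dig p i T = c := b1.symm.trans eT1
    have eTm : dig p (i-1) T = c := a2.symm.trans eTi
    refine ⟨⟨a1, b2, ?_, ?_⟩, ?_⟩
    · calc dig p (i-1) S = dig p (i-1) T := (b3 (i-1) (by omega) (by omega)).symm
        _ = c := eTm
    · intro m h1 h2 h3
      exact (a3 m h1 h2).trans (b3 m h2 h3)
    · refine digit_ext hp hT (setD_lt hp1 (by omega) hcp (setD_lt hp1 (by omega) hcp hR)) ?_
      intro m
      rw [dig_setD_pair hp1 hcp]
      by_cases h1 : m = i
      · subst h1; rw [if_pos (Or.inl rfl)]; exact eTi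
      by_cases h2 : m = i - 1
      · subst h2; rw [if_pos (Or.inr rfl)]; exact eTm
      · rw [if_neg (by tauto)]
        exact (a3 m h2 h1).symm
  · rintro ⟨⟨g1, g2, g3, g4⟩, rfl⟩
    have hdig := fun m => dig_setD_pair (i := i) hp1 hcp R m
    have eTi : dig p i (setD p i c (setD p (i-1) c R)) = c := by
      rw [hdig i, if_pos (Or.inl rfl)]
    have eTm : dig p (i-1) (setD p i c (setD p (i-1) c R)) = c := by
      rw [hdig (i-1), if_pos (Or.inr rfl)]
    have eT1 : dig p (i+1) (setD p i c (setD p (i-1) c R)) = c := by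
      rw [hdig (i+1), if_neg (by omega)]
    refine ⟨⟨g1, eTi.trans eTm.symm, ?_⟩, ⟨eT1.trans eTi.symm, g2, ?_⟩⟩
    · intro m h1 h2
      rw [hdig m, if_neg (by tauto)]
    · intro m h1 h2
      rw [hdig m]
      by_cases h3 : m = i - 1
      · subst h3; rw [if_pos (Or.inr rfl)]
        exact g3.symm
      · rw [if_neg (by tauto)]
        exact g4 m h3 h1 h2

lemma cruxB2 (hp : 2 ≤ p) {n i : ℕ} (hi1 : 1 ≤ i) (hi2 : i + 1 < n) {R S Q : ℕ}
    (hR : R < p ^ n) (hS : S < p ^ n) (hQ : Q < p ^ n) :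
    (Gb p i R S ∧ Dd p i S Q) ↔
      (Dd p i R Q ∧ S = setD p i (dig p (i+1) R) (setD p (i-1) (dig p (i+1) R) Q)) := by
  have hp1 : 1 ≤ p := by omega
  set c := dig p (i+1) R with hc
  have hcp : c < p := dig_lt hp1 _ _
  simp only [Dd, Gb]
  constructor
  · rintro ⟨⟨g1, g2, g3, g4⟩, ⟨e1, e2, e3⟩⟩
    have eSm : dig p (i-1) S = c := g3
    have eSi : dig p i S = c := e1.trans eSm
    have eS1 : dig p (i+1) S = c := g2.trans eSi
    refine ⟨⟨g1, e2, ?_⟩, ?_⟩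
    · intro m h1 h2
      by_cases h3 : m = i + 1
      · subst h3
        calc dig p (i+1) R = dig p (i+1) S := eS1.symm
          _ = dig p (i+1) Q := e3 (i+1) (by omega) (by omega)
      · exact (g4 m h1 h2 h3).trans (e3 m h1 h2)
    · refine digit_ext hp hS (setD_lt hp1 (by omega) hcp (setD_lt hp1 (by omega) hcp hQ)) ?_
      intro m
      rw [dig_setD_pair hp1 hcp]
      by_cases h1 : m = i
      · subst h1; rw [if_pos (Or.inl rfl)]; exact eSi
      by_cases h2 : m = i - 1
      · subst h2; rw [if_pos (Or.inr rfl)]; exact eSm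
      · rw [if_neg (by tauto)]
        exact e3 m h2 h1
  · rintro ⟨⟨q1, q2, q3⟩, rfl⟩
    have hdig := fun m => dig_setD_pair (i := i) hp1 hcp Q m
    have eSi : dig p i (setD p i c (setD p (i-1) c Q)) = c := by
      rw [hdig i, if_pos (Or.inl rfl)]
    have eSm : dig p (i-1) (setD p i c (setD p (i-1) c Q)) = c := by
      rw [hdig (i-1), if_pos (Or.inr rfl)]
    have eS1 : dig p (i+1) (setD p i c (setD p (i-1) c Q)) = dig p (i+1) Q := by
      rw [hdig (i+1), if_neg (by omega)]
    refine ⟨⟨q1, ?_, eSm, ?_⟩, ⟨eSi.trans eSm.symm, q2, ?_⟩⟩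
    · rw [eS1, eSi, ← q3 (i+1) (by omega) (by omega)]
    · intro m h1 h2 h3
      rw [hdig m, if_neg (by tauto)]
      exact q3 m h1 h2
    · intro m h1 h2
      rw [hdig m, if_neg (by tauto)]

def Gc (p i r s : ℕ) : Prop :=
  dig p (i+1) r = dig p i r ∧ dig p i s = dig p (i-1) s ∧
  dig p (i+1) s = dig p (i-1) r ∧
  ∀ m, m ≠ i-1 → m ≠ i → m ≠ i+1 → dig p m r = dig p m s

lemma cruxC1 (hp : 2 ≤ p) {n i : ℕ} (hi1 : 1 ≤ i) (hi2 : i + 1 < n) {R S T : ℕ}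
    (hR : R < p ^ n) (hS : S < p ^ n) (hT : T < p ^ n) :
    (Dd p (i+1) R T ∧ Dd p i T S) ↔
      (Gc p i R S ∧ T = setD p (i+1) (dig p (i-1) R) (setD p i (dig p (i-1) R) R)) := by
  have hp1 : 1 ≤ p := by omega
  set c := dig p (i-1) R with hc
  have hcp : c < p := dig_lt hp1 _ _
  simp only [Dd, Gc, Nat.add_sub_cancel]
  have hpair : ∀ m x, dig p m (setD p (i+1) c (setD p i c x)) =
      if m = i + 1 ∨ m = i then c else dig p m x := by
    intro m x
    have := dig_setD_pair (i := i+1) hp1 hcp x m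
    rwa [Nat.add_sub_cancel] at this
  constructor
  · rintro ⟨⟨a1, a2, a3⟩, ⟨b1, b2, b3⟩⟩
    have eTm : dig p (i-1) T = c := (a3 (i-1) (by omega) (by omega)).symm
    have eTi : dig p i T = c := b1.trans eTm
    have eT1 : dig p (i+1) T = c := a2.trans eTi
    refine ⟨⟨a1, b2, ?_, ?_⟩, ?_⟩
    · calc dig p (i+1) S = dig p (i+1) T := (b3 (i+1) (by omega) (by omega)).symm
        _ = c := eT1
    · intro m h1 h2 h3
      exact (a3 m h2 h3).trans (b3 m h1 h2)
    · refine digit_ext hp hT (setD_lt hp1 (by omega) hcp (setD_lt hp1 (by omega) hcp hR)) ?_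
      intro m
      rw [hpair]
      by_cases h1 : m = i + 1
      · subst h1; rw [if_pos (Or.inl rfl)]; exact eT1
      by_cases h2 : m = i
      · subst h2; rw [if_pos (Or.inr rfl)]; exact eTi
      · rw [if_neg (by tauto)]
        exact (a3 m h2 h1).symm
  · rintro ⟨⟨g1, g2, g3, g4⟩, rfl⟩
    have eTi : dig p i (setD p (i+1) c (setD p i c R)) = c := by
      rw [hpair, if_pos (Or.inr rfl)]
    have eT1 : dig p (i+1) (setD p (i+1) c (setD p i c R)) = c := by
      rw [hpair, if_pos (Or.inl rfl)]
    have eTm : dig p (i-1) (setD p (i+1) c (setD p i c R)) = c := by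
      rw [hpair, if_neg (by omega)]
    refine ⟨⟨g1, eT1.trans eTi.symm, ?_⟩, ⟨eTi.trans eTm.symm, g2, ?_⟩⟩
    · intro m h1 h2
      rw [hpair, if_neg (by tauto)]
    · intro m h1 h2
      rw [hpair]
      by_cases h3 : m = i + 1
      · subst h3; rw [if_pos (Or.inl rfl)]
        exact g3.symm
      · rw [if_neg (by tauto)]
        exact g4 m h1 h2 h3

lemma cruxC2 (hp : 2 ≤ p) {n i : ℕ} (hi1 : 1 ≤ i) (hi2 : i + 1 < n) {R S Q : ℕ}
    (hR : R < p ^ n) (hS : S < p ^ n) (hQ : Q < p ^ n) :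
    (Gc p i R S ∧ Dd p (i+1) S Q) ↔
      (Dd p (i+1) R Q ∧ S = setD p (i+1) (dig p (i-1) R) (setD p i (dig p (i-1) R) Q)) := by
  have hp1 : 1 ≤ p := by omega
  set c := dig p (i-1) R with hc
  have hcp : c < p := dig_lt hp1 _ _
  simp only [Dd, Gc, Nat.add_sub_cancel]
  have hpair : ∀ m x, dig p m (setD p (i+1) c (setD p i c x)) =
      if m = i + 1 ∨ m = i then c else dig p m x := by
    intro m x
    have := dig_setD_pair (i := i+1) hp1 hcp x m
    rwa [Nat.add_sub_cancel] at this
  constructor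
  · rintro ⟨⟨g1, g2, g3, g4⟩, ⟨e1, e2, e3⟩⟩
    have eS1 : dig p (i+1) S = c := g3
    have eSi : dig p i S = c := e1.symm.trans eS1
    have eSm : dig p (i-1) S = c := g2.symm.trans eSi
    refine ⟨⟨g1, e2, ?_⟩, ?_⟩
    · intro m h1 h2
      by_cases h3 : m = i - 1
      · subst h3
        calc dig p (i-1) R = dig p (i-1) S := eSm.symm
          _ = dig p (i-1) Q := e3 (i-1) (by omega) (by omega)
      · exact (g4 m h3 h1 h2).trans (e3 m h1 h2)
    · refine digit_ext hp hS (setD_lt hp1 (by omega) hcp (setD_lt hp1 (by omega) hcp hQ)) ?_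
      intro m
      rw [hpair]
      by_cases h1 : m = i + 1
      · subst h1; rw [if_pos (Or.inl rfl)]; exact eS1
      by_cases h2 : m = i
      · subst h2; rw [if_pos (Or.inr rfl)]; exact eSi
      · rw [if_neg (by tauto)]
        exact e3 m h2 h1
  · rintro ⟨⟨q1, q2, q3⟩, rfl⟩
    have eSi : dig p i (setD p (i+1) c (setD p i c Q)) = c := by
      rw [hpair, if_pos (Or.inr rfl)]
    have eS1 : dig p (i+1) (setD p (i+1) c (setD p i c Q)) = c := by
      rw [hpair, if_pos (Or.inl rfl)]
    have eSm : dig p (i-1) (setD p (i+1) c (setD p i c Q)) = dig p (i-1) Q := by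
      rw [hpair, if_neg (by omega)]
    refine ⟨⟨q1, ?_, eS1, ?_⟩, ⟨eS1.trans eSi.symm, q2, ?_⟩⟩
    · rw [eSi, eSm, ← q3 (i-1) (by omega) (by omega)]
    · intro m h1 h2 h3
      rw [hpair, if_neg (by tauto)]
      exact q3 m h2 h3
    · intro m h1 h2
      rw [hpair, if_neg (by tauto)]

lemma cruxSame (hp : 2 ≤ p) {n i : ℕ} (hi1 : 1 ≤ i) (hi2 : i < n) {R S T : ℕ}
    (hR : R < p ^ n) (hS : S < p ^ n) (hT : T < p ^ n) :
    (Dd p i R T ∧ Dd p i T S) ↔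
      (Dd p i R S ∧ ∃ c, c < p ∧ T = setD p i c (setD p (i-1) c R)) := by
  have hp1 : 1 ≤ p := by omega
  constructor
  · rintro ⟨⟨a1, a2, a3⟩, ⟨b1, b2, b3⟩⟩
    refine ⟨⟨a1, b2, fun m h1 h2 => (a3 m h1 h2).trans (b3 m h1 h2)⟩,
      dig p i T, dig_lt hp1 _ _, ?_⟩
    refine digit_ext hp hT
      (setD_lt hp1 hi2 (dig_lt hp1 _ _) (setD_lt hp1 (by omega) (dig_lt hp1 _ _) hR)) ?_
    intro m
    rw [dig_setD_pair hp1 (dig_lt hp1 _ _)]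
    by_cases h1 : m = i
    · subst h1; rw [if_pos (Or.inl rfl)]
    by_cases h2 : m = i - 1
    · subst h2; rw [if_pos (Or.inr rfl)]; exact a2.symm
    · rw [if_neg (by tauto)]
      exact (a3 m h2 h1).symm
  · rintro ⟨⟨a1, b2, ab3⟩, c, hcp, rfl⟩
    have hdig := fun m => dig_setD_pair (i := i) hp1 hcp R m
    have eTi : dig p i (setD p i c (setD p (i-1) c R)) = c := by
      rw [hdig i, if_pos (Or.inl rfl)]
    have eTm : dig p (i-1) (setD p i c (setD p (i-1) c R)) = c := by
      rw [hdig (i-1), if_pos (Or.inr rfl)]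
    refine ⟨⟨a1, eTi.trans eTm.symm, ?_⟩, ⟨eTi.trans eTm.symm, b2, ?_⟩⟩
    · intro m h1 h2
      rw [hdig m, if_neg (by tauto)]
    · intro m h1 h2
      rw [hdig m, if_neg (by tauto)]
      exact ab3 m h1 h2


lemma ite_mul_ite {F : Type*} [MulZeroOneClass F] (P Q : Prop) [Decidable P] [Decidable Q] :
    (if P then (1:F) else 0) * (if Q then 1 else 0) = if P ∧ Q then 1 else 0 := by
  by_cases hP : P <;> by_cases hQ : Q <;> simp [hP, hQ]

lemma sum_unique {F : Type*} [Field F] {N : ℕ} (A : Fin N → Prop) (E : Prop)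
    [DecidablePred A] [Decidable E] (t₀ : Fin N)
    (h : ∀ t, A t ↔ (E ∧ t = t₀)) :
    ∑ t : Fin N, (if A t then (1:F) else 0) = if E then 1 else 0 := by
  classical
  rw [Finset.sum_congr rfl (fun t _ => if_congr (h t) rfl rfl)]
  by_cases hE : E
  · simp only [hE, true_and]
    rw [Finset.sum_ite_eq' Finset.univ t₀ (fun _ => (1:F))]
    simp [hE]
  · simp [hE]

lemma sum_count {F : Type*} [Field F] {N q : ℕ} (A : Fin N → Prop) (E : Prop)
    [DecidablePred A] [Decidable E]
    (g : Fin q → Fin N) (hg : Function.Injective g)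
    (h : ∀ t, A t ↔ (E ∧ ∃ c, t = g c)) :
    ∑ t : Fin N, (if A t then (1:F) else 0) = if E then (q : F) else 0 := by
  classical
  rw [Finset.sum_congr rfl (fun t _ => if_congr (h t) rfl rfl)]
  by_cases hE : E
  · simp only [hE, true_and, if_true]
    rw [Finset.sum_boole]
    have himg : (Finset.univ.filter (fun t : Fin N => ∃ c, t = g c)) = Finset.univ.image g := by
      ext t
      simp only [Finset.mem_filter, Finset.mem_univ, true_and, Finset.mem_image]
      constructor
      · rintro ⟨c, rfl⟩; exact ⟨c, rfl⟩
      · rintro ⟨c, rfl⟩; exact ⟨c, rfl⟩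
    rw [himg, Finset.card_image_of_injective _ hg, Finset.card_univ, Fintype.card_fin]
  · simp [hE]

end TLaux

/-- For all `p ≥ 1`, `n ≥ 1` and `1 ≤ i, j ≤ n − 1`, the matrices `h_k^n` satisfy the
Temperley–Lieb relations: `h_i^n h_j^n = h_j^n h_i^n` whenever `|i − j| ≥ 2`;
`h_i^n h_{i+1}^n h_i^n = h_i^n` and `h_{i+1}^n h_i^n h_{i+1}^n = h_{i+1}^n`; and
`h_i^n h_i^n = p · h_i^n`. -/
theorem hMat_temperley_lieb_relations (F : Type*) [Field F] (p n : ℕ)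
    (hp : 1 ≤ p) (hn : 1 ≤ n) :
    (∀ (i j : ℕ) (hi1 : 1 ≤ i) (hi2 : i < n) (hj1 : 1 ≤ j) (hj2 : j < n),
      i + 2 ≤ j ∨ j + 2 ≤ i →
      hMat F p n i hi1 hi2 * hMat F p n j hj1 hj2 =
        hMat F p n j hj1 hj2 * hMat F p n i hi1 hi2) ∧
    (∀ (i : ℕ) (h1 : 1 ≤ i) (h2 : i + 1 < n),
      hMat F p n i h1 (by omega) * hMat F p n (i + 1) (by omega) h2 *
          hMat F p n i h1 (by omega) = hMat F p n i h1 (by omega) ∧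
      hMat F p n (i + 1) (by omega) h2 * hMat F p n i h1 (by omega) *
          hMat F p n (i + 1) (by omega) h2 = hMat F p n (i + 1) (by omega) h2) ∧
    (∀ (i : ℕ) (h1 : 1 ≤ i) (h2 : i < n),
      hMat F p n i h1 h2 * hMat F p n i h1 h2 = (p : F) • hMat F p n i h1 h2) := by
  classical
  by_cases hp2 : 2 ≤ p
  · have key : ∀ (k : ℕ) (h1 : 1 ≤ k) (h2 : k < n) (r s : Fin (p ^ n)),
        hMat F p n k h1 h2 r s = if TLaux.Dd p k r.val s.val then 1 else 0 :=
      fun k h1 h2 r s => TLaux.hMat_apply F hp2 h1 h2 r s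
    have hp1 : (1 : ℕ) ≤ p := by omega
    refine ⟨?_, ?_, ?_⟩
    · -- commutation
      have aux : ∀ (i j : ℕ) (hi1 : 1 ≤ i) (hi2 : i < n) (hj1 : 1 ≤ j) (hj2 : j < n),
          (i + 2 ≤ j ∨ j + 2 ≤ i) →
          ∀ r s : Fin (p ^ n), (hMat F p n i hi1 hi2 * hMat F p n j hj1 hj2) r s =
            if TLaux.Ecomm p i j r.val s.val then 1 else 0 := by
        intro i j hi1 hi2 hj1 hj2 hd r s
        rw [Matrix.mul_apply]
        simp_rw [key, TLaux.ite_mul_ite]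
        have hiff : ∀ t : Fin (p ^ n),
            (TLaux.Dd p i r.val t.val ∧ TLaux.Dd p j t.val s.val) ↔
              (TLaux.Ecomm p i j r.val s.val ∧ t =
                (⟨TLaux.setD p i (TLaux.dig p i s.val)
                    (TLaux.setD p (i-1) (TLaux.dig p i s.val) r.val),
                  TLaux.setD_lt hp1 hi2 (TLaux.dig_lt hp1 _ _)
                    (TLaux.setD_lt hp1 (by omega) (TLaux.dig_lt hp1 _ _) r.isLt)⟩ :
                  Fin (p ^ n))) := by
          intro t
          simp only [Fin.ext_iff]
          exact TLaux.cruxA hp2 hi1 hi2 hj1 hj2 hd r.isLt s.isLt t.isLt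
        rw [TLaux.sum_unique _ _ _ hiff]
      intro i j hi1 hi2 hj1 hj2 hd
      ext r s
      rw [aux i j hi1 hi2 hj1 hj2 hd r s, aux j i hj1 hj2 hi1 hi2 (Or.symm hd) r s]
      refine if_congr ?_ rfl rfl
      unfold TLaux.Ecomm
      constructor
      · rintro ⟨a,b,c,d,e⟩; exact ⟨b,a,d,c,fun m u v w x => e m w x u v⟩
      · rintro ⟨a,b,c,d,e⟩; exact ⟨b,a,d,c,fun m u v w x => e m w x u v⟩
    · -- braid relations
      intro i h1 h2
      have mul12 : ∀ (ha : 1 ≤ i) (hb : i < n) (hc : 1 ≤ i + 1) (hd : i + 1 < n)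
          (r u : Fin (p ^ n)),
          (hMat F p n i ha hb * hMat F p n (i+1) hc hd) r u =
            if TLaux.Gb p i r.val u.val then 1 else 0 := by
        intro ha hb hc hd r u
        rw [Matrix.mul_apply]
        simp_rw [key, TLaux.ite_mul_ite]
        have hiff : ∀ t : Fin (p ^ n),
            (TLaux.Dd p i r.val t.val ∧ TLaux.Dd p (i+1) t.val u.val) ↔
              (TLaux.Gb p i r.val u.val ∧ t =
                (⟨TLaux.setD p i (TLaux.dig p (i+1) r.val)
                    (TLaux.setD p (i-1) (TLaux.dig p (i+1) r.val) r.val),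
                  TLaux.setD_lt hp1 (by omega) (TLaux.dig_lt hp1 _ _)
                    (TLaux.setD_lt hp1 (by omega) (TLaux.dig_lt hp1 _ _) r.isLt)⟩ :
                  Fin (p ^ n))) := by
          intro t
          simp only [Fin.ext_iff]
          exact TLaux.cruxB1 hp2 h1 h2 r.isLt u.isLt t.isLt
        rw [TLaux.sum_unique _ _ _ hiff]
      have mul21 : ∀ (ha : 1 ≤ i) (hb : i < n) (hc : 1 ≤ i + 1) (hd : i + 1 < n)
          (r u : Fin (p ^ n)),
          (hMat F p n (i+1) hc hd * hMat F p n i ha hb) r u =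
            if TLaux.Gc p i r.val u.val then 1 else 0 := by
        intro ha hb hc hd r u
        rw [Matrix.mul_apply]
        simp_rw [key, TLaux.ite_mul_ite]
        have hiff : ∀ t : Fin (p ^ n),
            (TLaux.Dd p (i+1) r.val t.val ∧ TLaux.Dd p i t.val u.val) ↔
              (TLaux.Gc p i r.val u.val ∧ t =
                (⟨TLaux.setD p (i+1) (TLaux.dig p (i-1) r.val)
                    (TLaux.setD p i (TLaux.dig p (i-1) r.val) r.val),
                  TLaux.setD_lt hp1 (by omega) (TLaux.dig_lt hp1 _ _)
                    (TLaux.setD_lt hp1 (by omega) (TLaux.dig_lt hp1 _ _) r.isLt)⟩ :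
                  Fin (p ^ n))) := by
          intro t
          simp only [Fin.ext_iff]
          exact TLaux.cruxC1 hp2 h1 h2 r.isLt u.isLt t.isLt
        rw [TLaux.sum_unique _ _ _ hiff]
      constructor
      · ext r s
        rw [Matrix.mul_apply]
        simp_rw [mul12, key, TLaux.ite_mul_ite]
        have hiff : ∀ t : Fin (p ^ n),
            (TLaux.Gb p i r.val t.val ∧ TLaux.Dd p i t.val s.val) ↔
              (TLaux.Dd p i r.val s.val ∧ t =
                (⟨TLaux.setD p i (TLaux.dig p (i+1) r.val)
                    (TLaux.setD p (i-1) (TLaux.dig p (i+1) r.val) s.val),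
                  TLaux.setD_lt hp1 (by omega) (TLaux.dig_lt hp1 _ _)
                    (TLaux.setD_lt hp1 (by omega) (TLaux.dig_lt hp1 _ _) s.isLt)⟩ :
                  Fin (p ^ n))) := by
          intro t
          simp only [Fin.ext_iff]
          exact TLaux.cruxB2 hp2 h1 h2 r.isLt t.isLt s.isLt
        rw [TLaux.sum_unique _ _ _ hiff]
      · ext r s
        rw [Matrix.mul_apply]
        simp_rw [mul21, key, TLaux.ite_mul_ite]
        have hiff : ∀ t : Fin (p ^ n),
            (TLaux.Gc p i r.val t.val ∧ TLaux.Dd p (i+1) t.val s.val) ↔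
              (TLaux.Dd p (i+1) r.val s.val ∧ t =
                (⟨TLaux.setD p (i+1) (TLaux.dig p (i-1) r.val)
                    (TLaux.setD p i (TLaux.dig p (i-1) r.val) s.val),
                  TLaux.setD_lt hp1 (by omega) (TLaux.dig_lt hp1 _ _)
                    (TLaux.setD_lt hp1 (by omega) (TLaux.dig_lt hp1 _ _) s.isLt)⟩ :
                  Fin (p ^ n))) := by
          intro t
          simp only [Fin.ext_iff]
          exact TLaux.cruxC2 hp2 h1 h2 r.isLt t.isLt s.isLt
        rw [TLaux.sum_unique _ _ _ hiff]
    · -- the p-relation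
      intro i h1 h2
      ext r s
      rw [Matrix.mul_apply, Matrix.smul_apply]
      simp_rw [key, TLaux.ite_mul_ite]
      have hg : Function.Injective
          (fun c : Fin p => (⟨TLaux.setD p i c.val (TLaux.setD p (i-1) c.val r.val),
            TLaux.setD_lt hp1 h2 c.isLt
              (TLaux.setD_lt hp1 (by omega) c.isLt r.isLt)⟩ : Fin (p ^ n))) := by
        intro c c' hcc
        have hv := congrArg Fin.val hcc
        simp only at hv
        have hd := congrArg (TLaux.dig p i) hv
        rw [TLaux.dig_setD_self hp1 c.isLt, TLaux.dig_setD_self hp1 c'.isLt] at hd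
        exact Fin.ext hd
      have hiff : ∀ t : Fin (p ^ n),
          (TLaux.Dd p i r.val t.val ∧ TLaux.Dd p i t.val s.val) ↔
            (TLaux.Dd p i r.val s.val ∧ ∃ c : Fin p,
              t = (⟨TLaux.setD p i c.val (TLaux.setD p (i-1) c.val r.val),
                TLaux.setD_lt hp1 h2 c.isLt
                  (TLaux.setD_lt hp1 (by omega) c.isLt r.isLt)⟩ : Fin (p ^ n))) := by
        intro t
        constructor
        · intro h
          obtain ⟨hE, c, hc, ht⟩ :=
            (TLaux.cruxSame hp2 h1 h2 r.isLt s.isLt t.isLt).mp h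
          exact ⟨hE, ⟨c, hc⟩, Fin.ext ht⟩
        · rintro ⟨hE, c, rfl⟩
          exact (TLaux.cruxSame hp2 h1 h2 r.isLt s.isLt
            (TLaux.setD_lt hp1 h2 c.isLt
              (TLaux.setD_lt hp1 (by omega) c.isLt r.isLt))).mpr
            ⟨hE, c.val, c.isLt, rfl⟩
      rw [TLaux.sum_count _ _ _ hg hiff]
      split_ifs with h <;> simp
  · -- p = 1
    have hp1 : p = 1 := by omega
    subst hp1
    have ent : ∀ (k : ℕ) (h1 : 1 ≤ k) (h2 : k < n) (r s : Fin (1 ^ n)),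
        hMat F 1 n k h1 h2 r s = 1 := by
      intro k h1 h2 r s
      have e1 : (1:ℕ) ^ n = 1 := one_pow n
      have hr : (r : ℕ) = 0 := by have := r.isLt; omega
      have hs : (s : ℕ) = 0 := by have := s.isLt; omega
      rw [hMat, Matrix.reindex_apply, Matrix.submatrix_apply]
      simp only [kron, Ep, Matrix.of_apply, Matrix.mul_apply, Matrix.one_apply,
        Matrix.transpose_apply, Fin.sum_univ_one, Fin.ext_iff, Fin.coe_divNat,
        Fin.coe_modNat, finCongr_symm, finCongr_apply, Fin.coe_cast, hr, hs]
      simp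
    have sum1 : (∑ _t : Fin (1 ^ n), (1:F)) = 1 := by
      simp
    refine ⟨?_, ?_, ?_⟩
    · intro i j hi1 hi2 hj1 hj2 hd
      ext r s
      rw [Matrix.mul_apply, Matrix.mul_apply]
      simp_rw [ent]
    · intro i h1 h2
      have m12 : ∀ (a b : ℕ) (ha1 : 1 ≤ a) (ha2 : a < n) (hb1 : 1 ≤ b) (hb2 : b < n)
          (r s : Fin (1 ^ n)),
          (hMat F 1 n a ha1 ha2 * hMat F 1 n b hb1 hb2) r s = 1 := by
        intro a b ha1 ha2 hb1 hb2 r s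
        rw [Matrix.mul_apply]
        simp_rw [ent]
        simpa using sum1
      constructor
      · ext r s
        rw [Matrix.mul_apply]
        simp_rw [m12, ent]
        simpa using sum1
      · ext r s
        rw [Matrix.mul_apply]
        simp_rw [m12, ent]
        simpa using sum1
    · intro i h1 h2
      ext r s
      rw [Matrix.mul_apply, Matrix.smul_apply]
      simp_rw [ent]
      simpa using sum1
end
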